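/- arXiv:2310.19219 — 10 statements merged into one kernel-verified Lean document; each statement's English description precedes it below -/
import Mathlib

section
/- Let K be a finite set with at least two elements, let k(x,y) ≥ 0 (x ≠ y) be transition rates whose digraph G (arc (x,y) whenever k(x,y) > 0) is strongly connected, and let L be the backward generator. For every nonempty proper subset H ⊊ K, every eigenvalue of the principal submatrix of L obtained by restricting rows and columns to H has strictly negative real part. -/
open scoped Classical

/-- The backward generator `L` of the Markov jump process with rates `k`:
`L x y = k x y` for `x ≠ y` and `L x x = -∑_{z ≠ x} k x z`. -/
noncomputable def gen {K : Type*} [Fintype K] [DecidableEq K] (k : K → K → ℝ) :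
    Matrix K K ℝ :=
  Matrix.of fun x y => if x = y then -∑ z ∈ Finset.univ.erase x, k x z else k x y

/-- Strong connectivity (irreducibility) of the digraph with an arc `(x,y)` whenever
`k x y > 0`. -/
def StronglyConnected {K : Type*} (k : K → K → ℝ) : Prop :=
  ∀ x y : K, Relation.ReflTransGen (fun a b => 0 < k a b) x y

/-- Every eigenvalue of the principal submatrix of the backward generator `L` obtained by
restricting rows and columns to a nonempty proper subset `H ⊊ K` has strictly negative
real part. -/
theorem submatrix_eigenvalue_re_neg
    {K : Type*} [Fintype K] [DecidableEq K] (hcard : 2 ≤ Fintype.card K)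
    (k : K → K → ℝ) (hk : ∀ x y : K, x ≠ y → 0 ≤ k x y)
    (hirr : StronglyConnected k)
    (H : Finset K) (hH : H.Nonempty) (hHproper : H ≠ Finset.univ)
    (μ : ℂ) (v : {x // x ∈ H} → ℂ) (hv : v ≠ 0)
    (heig : (Matrix.of fun x y : {x // x ∈ H} =>
        ((gen k x.1 y.1 : ℝ) : ℂ)).mulVec v = μ • v) :
    μ.re < 0 := by
  classical
  by_contra hcon
  push_neg at hcon
  set S : K → ℝ := fun x => ∑ z ∈ Finset.univ.erase x, k x z with hSdef
  have hSnn : ∀ x, 0 ≤ S x := fun x =>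
    Finset.sum_nonneg fun z hz => hk x z (Ne.symm (Finset.ne_of_mem_erase hz))
  -- eigen equation rearranged
  have heq : ∀ x : {x // x ∈ H}, (μ + (S x.1 : ℂ)) * v x
      = ∑ y ∈ Finset.univ.erase x, ((k x.1 y.1 : ℝ) : ℂ) * v y := by
    intro x
    have h1 := congrFun heig x
    simp only [Matrix.mulVec, Matrix.of_apply, Pi.smul_apply, smul_eq_mul,
      dotProduct] at h1
    rw [← Finset.add_sum_erase _ _ (Finset.mem_univ x)] at h1
    have hd : gen k x.1 x.1 = -S x.1 := by simp [gen, hSdef]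
    rw [hd] at h1
    have h2 : ∀ y ∈ Finset.univ.erase x,
        ((gen k x.1 y.1 : ℝ) : ℂ) * v y = ((k x.1 y.1 : ℝ) : ℂ) * v y := by
      intro y hy
      have hne : x.1 ≠ y.1 := fun h => (Finset.ne_of_mem_erase hy) (Subtype.ext h.symm)
      simp [gen, hne]
    rw [Finset.sum_congr rfl h2] at h1
    push_cast at h1 ⊢
    linear_combination -h1
  have : Nonempty {x // x ∈ H} := ⟨⟨hH.choose, hH.choose_spec⟩⟩
  obtain ⟨x0, hx0⟩ := Finite.exists_max (fun x : {x // x ∈ H} => ‖v x‖)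
  set M := ‖v x0‖ with hMdef
  have hMpos : 0 < M := by
    obtain ⟨x, hx⟩ := Function.ne_iff.mp hv
    exact lt_of_lt_of_le (norm_pos_iff.mpr hx) (hx0 x)
  -- sum over subtype erase vs subset of H
  have hsum_eq : ∀ x : {x // x ∈ H}, (∑ y ∈ (Finset.univ.erase x : Finset {x // x ∈ H}), k x.1 y.1)
      = ∑ z ∈ H.erase x.1, k x.1 z := by
    intro x
    have e1 : (∑ y ∈ (Finset.univ.erase x : Finset {x // x ∈ H}), k x.1 y.1) + k x.1 x.1
        = ∑ z ∈ H, k x.1 z := by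
      rw [Finset.sum_erase_add _ _ (Finset.mem_univ x)]
      exact Finset.sum_coe_sort H (k x.1)
    have e2 : (∑ z ∈ H.erase x.1, k x.1 z) + k x.1 x.1 = ∑ z ∈ H, k x.1 z :=
      Finset.sum_erase_add _ _ x.2
    linarith
  have hsub : ∀ x : {x // x ∈ H}, H.erase x.1 ⊆ Finset.univ.erase x.1 := by
    intro x z hz
    exact Finset.mem_erase.mpr ⟨(Finset.mem_erase.mp hz).1, Finset.mem_univ z⟩
  have hle : ∀ x : {x // x ∈ H}, (∑ z ∈ H.erase x.1, k x.1 z) ≤ S x.1 := by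
    intro x
    exact Finset.sum_le_sum_of_subset_of_nonneg (hsub x)
      (fun z hz _ => hk x.1 z (Ne.symm (Finset.ne_of_mem_erase hz)))
  -- the basic chain of inequalities at a maximizing coordinate
  have hchain : ∀ x : {x // x ∈ H}, ‖v x‖ = M →
      (μ.re + S x.1) * M ≤ ‖μ + (S x.1 : ℂ)‖ * M ∧
      ‖μ + (S x.1 : ℂ)‖ * M
        ≤ ∑ y ∈ (Finset.univ.erase x : Finset {x // x ∈ H}), k x.1 y.1 * ‖v y‖ ∧
      (∑ y ∈ (Finset.univ.erase x : Finset {x // x ∈ H}), k x.1 y.1 * ‖v y‖)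
        ≤ (∑ z ∈ H.erase x.1, k x.1 z) * M ∧
      (∑ z ∈ H.erase x.1, k x.1 z) * M ≤ S x.1 * M := by
    intro x hxM
    have hknn : ∀ y ∈ (Finset.univ.erase x : Finset {x // x ∈ H}), 0 ≤ k x.1 y.1 := by
      intro y hy
      exact hk x.1 y.1 fun h => (Finset.ne_of_mem_erase hy) (Subtype.ext h.symm)
    refine ⟨?_, ?_, ?_, ?_⟩
    · have h1 : μ.re + S x.1 ≤ ‖μ + (S x.1 : ℂ)‖ := by
        have := Complex.re_le_norm (μ + (S x.1 : ℂ))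
        simpa using this
      exact mul_le_mul_of_nonneg_right h1 hMpos.le
    · calc ‖μ + (S x.1 : ℂ)‖ * M
          = ‖(μ + (S x.1 : ℂ)) * v x‖ := by rw [norm_mul, hxM]
        _ = ‖∑ y ∈ Finset.univ.erase x, ((k x.1 y.1 : ℝ) : ℂ) * v y‖ := by
            rw [heq x]
        _ ≤ ∑ y ∈ Finset.univ.erase x, ‖((k x.1 y.1 : ℝ) : ℂ) * v y‖ :=
            norm_sum_le _ _
        _ = ∑ y ∈ (Finset.univ.erase x : Finset {x // x ∈ H}), k x.1 y.1 * ‖v y‖ := by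
            refine Finset.sum_congr rfl fun y hy => ?_
            rw [norm_mul, Complex.norm_real, Real.norm_eq_abs, abs_of_nonneg (hknn y hy)]
    · rw [← hsum_eq x, Finset.sum_mul]
      refine Finset.sum_le_sum fun y hy => ?_
      exact mul_le_mul_of_nonneg_left (hx0 y) (hknn y hy)
    · exact mul_le_mul_of_nonneg_right (hle x) hMpos.le
  -- first: μ.re = 0
  have hre0 : μ.re = 0 := by
    obtain ⟨c1, c2, c3, c4⟩ := hchain x0 rfl
    nlinarith [hSnn x0.1]
  -- closure of the set of maximizing states
  have hstep : ∀ x : {x // x ∈ H}, ‖v x‖ = M → ∀ z : K, 0 < k x.1 z →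
      ∃ hz : z ∈ H, ‖v ⟨z, hz⟩‖ = M := by
    intro x hxM z hkz
    by_cases hzx : z = x.1
    · subst hzx; exact ⟨x.2, hxM⟩
    obtain ⟨c1, c2, c3, c4⟩ := hchain x hxM
    have hge : S x.1 * M ≤ ‖μ + (S x.1 : ℂ)‖ * M := by
      have h0 : μ.re + S x.1 = S x.1 := by rw [hre0]; ring
      rw [h0] at c1
      exact c1
    have e34 : (∑ z ∈ H.erase x.1, k x.1 z) * M = S x.1 * M := by linarith
    have eKH : (∑ z ∈ H.erase x.1, k x.1 z) = S x.1 :=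
      mul_right_cancel₀ hMpos.ne' e34
    have hzH : z ∈ H := by
      by_contra hzH
      have hzmem : z ∈ (Finset.univ.erase x.1) \ (H.erase x.1) := by
        simp [hzx, hzH]
      have hsd : ∑ w ∈ (Finset.univ.erase x.1) \ (H.erase x.1), k x.1 w = 0 := by
        have := Finset.sum_sdiff (hsub x) (f := k x.1)
        rw [eKH] at this
        linarith [this]
      have : k x.1 z = 0 := by
        have hnn : ∀ w ∈ (Finset.univ.erase x.1) \ (H.erase x.1), 0 ≤ k x.1 w := by
          intro w hw
          have hw' := (Finset.mem_sdiff.mp hw).1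
          exact hk x.1 w (Ne.symm (Finset.ne_of_mem_erase hw'))
        exact (Finset.sum_eq_zero_iff_of_nonneg hnn).mp hsd z hzmem
      linarith
    refine ⟨hzH, ?_⟩
    -- equality in step 3 forces |v y| = M wherever k > 0
    have e23 : (∑ y ∈ (Finset.univ.erase x : Finset {x // x ∈ H}), k x.1 y.1 * ‖v y‖)
        = (∑ z ∈ H.erase x.1, k x.1 z) * M := le_antisymm c3 (by linarith)
    set y : {x // x ∈ H} := ⟨z, hzH⟩ with hy
    have hymem : y ∈ (Finset.univ.erase x : Finset {x // x ∈ H}) :=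
      Finset.mem_erase.mpr ⟨fun h => hzx (congrArg Subtype.val h), Finset.mem_univ y⟩
    have hzero : ∑ y ∈ (Finset.univ.erase x : Finset {x // x ∈ H}),
        k x.1 y.1 * (M - ‖v y‖) = 0 := by
      have expand : ∑ y ∈ (Finset.univ.erase x : Finset {x // x ∈ H}),
          k x.1 y.1 * (M - ‖v y‖)
          = (∑ z ∈ H.erase x.1, k x.1 z) * M
            - ∑ y ∈ (Finset.univ.erase x : Finset {x // x ∈ H}), k x.1 y.1 * ‖v y‖ := by
        rw [← hsum_eq x, Finset.sum_mul, ← Finset.sum_sub_distrib]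
        exact Finset.sum_congr rfl fun y _ => by ring
      rw [expand, e23]; ring
    have hnn : ∀ w ∈ (Finset.univ.erase x : Finset {x // x ∈ H}),
        0 ≤ k x.1 w.1 * (M - ‖v w‖) := by
      intro w hw
      have h1 : 0 ≤ k x.1 w.1 :=
        hk x.1 w.1 fun h => (Finset.ne_of_mem_erase hw) (Subtype.ext h.symm)
      have h2 : 0 ≤ M - ‖v w‖ := by linarith [hx0 w]
      positivity
    have := (Finset.sum_eq_zero_iff_of_nonneg hnn).mp hzero y hymem
    have : M - ‖v y‖ = 0 := by
      rcases mul_eq_zero.mp this with h | h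
      · exact absurd h (by simpa [hy] using hkz.ne')
      · exact h
    linarith
  -- strong connectivity contradiction
  obtain ⟨w, hw⟩ : ∃ w, w ∉ H := by
    by_contra h
    push_neg at h
    exact hHproper (Finset.eq_univ_iff_forall.mpr h)
  have hfinal : ∀ u : K, Relation.ReflTransGen (fun a b => 0 < k a b) x0.1 u →
      ∃ hz : u ∈ H, ‖v ⟨u, hz⟩‖ = M := by
    intro u hreach
    induction hreach with
    | refl => exact ⟨x0.2, rfl⟩
    | tail hab hbc ih =>
        obtain ⟨h1, h2⟩ := ih
        exact hstep ⟨_, h1⟩ h2 _ hbc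
  exact hw (hfinal w (hirr x0.1 w)).1
end

section
/- Let H ⊊ K be a nonempty proper subset and let L_H be the generator of the stopped process, i.e. the K×K matrix with rows indexed by x ∈ H equal to the corresponding rows of L and rows indexed by x ∉ H equal to zero. Then there exist constants C ≥ 0 and c > 0 such that for all x, y ∈ H and all t ≥ 0, the matrix exponential satisfies (e^{t L_H})_{x,y} ≤ C e^{−c t}; in particular (e^{t L_H} 1_H)(x) ≤ C e^{−c t} for all x, where 1_H is the indicator of H. -/
open scoped Classical

/-- The generator `L_H` of the stopped process: rows indexed by `x ∈ H` agree with those of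
`L`, rows indexed by `x ∉ H` vanish. -/
noncomputable def genH {K : Type*} [Fintype K] [DecidableEq K] (k : K → K → ℝ)
    (H : Finset K) : Matrix K K ℝ :=
  Matrix.of fun x y => if x ∈ H then gen k x y else 0

section Aux
variable {K : Type*} [Fintype K] [DecidableEq K]

lemma exp_entry_hasSum (M : Matrix K K ℝ) (x y : K) :
    HasSum (fun n : ℕ => ((n.factorial : ℝ))⁻¹ * (M ^ n) x y)
      (NormedSpace.exp M x y) := by
  have key : HasSum (fun n : ℕ => ((n.factorial : ℝ))⁻¹ • M ^ n) (NormedSpace.exp M) := by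
    letI : SeminormedRing (Matrix K K ℝ) := Matrix.linftyOpSemiNormedRing
    letI : NormedRing (Matrix K K ℝ) := Matrix.linftyOpNormedRing
    letI : NormedAlgebra ℝ (Matrix K K ℝ) := Matrix.linftyOpNormedAlgebra
    exact NormedSpace.exp_series_hasSum_exp' M
  have h1 := (Pi.hasSum.mp ((Pi.hasSum).mp key x)) y
  simpa [Matrix.smul_apply] using h1

lemma pow_entry_nonneg {M : Matrix K K ℝ} (hM : ∀ x y, 0 ≤ M x y) :
    ∀ n (x y : K), 0 ≤ (M ^ n) x y := by
  intro n
  induction n with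
  | zero => intro x y; simp [Matrix.one_apply]; positivity
  | succ n ih =>
    intro x y
    rw [pow_succ, Matrix.mul_apply]
    exact Finset.sum_nonneg fun l _ => mul_nonneg (ih x l) (hM l y)

lemma exp_entry_nonneg {M : Matrix K K ℝ} (hM : ∀ x y, 0 ≤ M x y) (x y : K) :
    0 ≤ NormedSpace.exp M x y :=
  hasSum_le (fun n => mul_nonneg (by positivity) (pow_entry_nonneg hM n x y))
    hasSum_zero (exp_entry_hasSum M x y)

lemma exp_entry_pos {M : Matrix K K ℝ} (hM : ∀ x y, 0 ≤ M x y) {n : ℕ} {x y : K}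
    (h : 0 < (M ^ n) x y) : 0 < NormedSpace.exp M x y := by
  have h1 : ((n.factorial : ℝ))⁻¹ * (M ^ n) x y ≤ NormedSpace.exp M x y :=
    le_hasSum (exp_entry_hasSum M x y) n
      (fun j _ => mul_nonneg (by positivity) (pow_entry_nonneg hM j x y))
  have h2 : 0 < ((n.factorial : ℝ))⁻¹ * (M ^ n) x y := by positivity
  linarith

lemma exp_rowsum_one {M : Matrix K K ℝ} (hrow : ∀ x, ∑ y, M x y = 0) (x : K) :
    ∑ y, NormedSpace.exp M x y = 1 := by
  have hpow : ∀ n : ℕ, ∑ y, ((n.factorial : ℝ))⁻¹ * (M ^ n) x y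
      = if n = 0 then (1 : ℝ) else 0 := by
    intro n
    rw [← Finset.mul_sum]
    cases n with
    | zero => simp [Matrix.one_apply]
    | succ n =>
      have : ∑ y, (M ^ (n + 1)) x y = 0 := by
        rw [pow_succ]
        simp only [Matrix.mul_apply]
        rw [Finset.sum_comm]
        simp [← Finset.mul_sum, hrow]
      simp [this]
  have h : HasSum (fun n : ℕ => ∑ y, ((n.factorial : ℝ))⁻¹ * (M ^ n) x y)
      (∑ y, NormedSpace.exp M x y) :=
    hasSum_sum (fun y _ => exp_entry_hasSum M x y)
  have h2 : HasSum (fun n : ℕ => if n = 0 then (1 : ℝ) else 0) 1 := by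
    simpa using hasSum_ite_eq (0 : ℕ) (1 : ℝ)
  rw [show (fun n : ℕ => ∑ y, ((n.factorial : ℝ))⁻¹ * (M ^ n) x y)
      = fun n : ℕ => if n = 0 then (1 : ℝ) else 0 from funext hpow] at h
  exact h.unique h2

lemma exp_zero_row {M : Matrix K K ℝ} {z : K} (hz : ∀ y, M z y = 0) (y : K) :
    NormedSpace.exp M z y = (1 : Matrix K K ℝ) z y := by
  have hpow : ∀ n : ℕ, ((n.factorial : ℝ))⁻¹ * (M ^ n) z y
      = if n = 0 then (1 : Matrix K K ℝ) z y else 0 := by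
    intro n
    cases n with
    | zero => simp
    | succ n =>
      have : (M ^ (n + 1)) z y = 0 := by
        rw [pow_succ', Matrix.mul_apply]
        simp [hz]
      simp [this]
  have h := exp_entry_hasSum M z y
  rw [funext hpow] at h
  exact h.unique (by simpa using hasSum_ite_eq (0 : ℕ) ((1 : Matrix K K ℝ) z y))

lemma exp_smul_one (c : ℝ) :
    NormedSpace.exp (c • (1 : Matrix K K ℝ)) = Real.exp c • (1 : Matrix K K ℝ) := by
  ext x y
  have h := exp_entry_hasSum (c • (1 : Matrix K K ℝ)) x y
  have hpow : ∀ n : ℕ, ((c • (1 : Matrix K K ℝ)) ^ n) x y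
      = c ^ n * (1 : Matrix K K ℝ) x y := by
    intro n
    rw [smul_pow, one_pow, Matrix.smul_apply, smul_eq_mul]
  simp only [hpow] at h
  have h2 : HasSum (fun n : ℕ => ((n.factorial : ℝ))⁻¹ * (c ^ n * (1 : Matrix K K ℝ) x y))
      (Real.exp c * (1 : Matrix K K ℝ) x y) := by
    have h3 := NormedSpace.exp_series_hasSum_exp' (𝕂 := ℝ) (𝔸 := ℝ) c
    rw [← Real.exp_eq_exp_ℝ] at h3
    have h4 := h3.mul_right ((1 : Matrix K K ℝ) x y)
    simpa [mul_assoc, smul_eq_mul] using h4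
  have := h.unique h2
  simpa [Matrix.smul_apply, smul_eq_mul] using this

lemma reach_pos (k : K → K → ℝ) (H : Finset K) (M : Matrix K K ℝ)
    (hnn : ∀ a b, 0 ≤ M a b) (hdiag : ∀ a, 0 < M a a)
    (harc : ∀ a ∈ H, ∀ b, 0 < k a b → 0 < M a b)
    (x y : K) (h : Relation.ReflTransGen (fun a b => 0 < k a b) x y) (hy : y ∉ H) :
    ∃ (n : ℕ) (z : K), z ∉ H ∧ 0 < (M ^ n) x z := by
  induction h using Relation.ReflTransGen.head_induction_on with
  | refl => exact ⟨0, y, hy, by simp [Matrix.one_apply_eq]⟩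
  | @head a c hab hbc ih =>
    by_cases ha : a ∈ H
    · obtain ⟨n, z, hz, hpos⟩ := ih
      refine ⟨n + 1, z, hz, ?_⟩
      rw [pow_succ', Matrix.mul_apply]
      refine Finset.sum_pos' (fun l _ => mul_nonneg (hnn a l) (pow_entry_nonneg hnn n l z))
        ⟨c, Finset.mem_univ c, mul_pos (harc a ha c hab) hpos⟩
    · exact ⟨0, a, ha, by simp [Matrix.one_apply_eq]⟩

end Aux

/-- There are constants `C ≥ 0` and `c > 0` such that the matrix exponential of the stopped
generator decays exponentially: `(e^{t L_H})_{x,y} ≤ C e^{-c t}` for `x, y ∈ H` and `t ≥ 0`;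
in particular `(e^{t L_H} 1_H)(x) ≤ C e^{-c t}` for all `x`. -/
theorem stopped_semigroup_exponential_decay
    {K : Type*} [Fintype K] [DecidableEq K] (hcard : 2 ≤ Fintype.card K)
    (k : K → K → ℝ) (hk : ∀ x y : K, x ≠ y → 0 ≤ k x y)
    (hirr : StronglyConnected k)
    (H : Finset K) (hH : H.Nonempty) (hHproper : H ≠ Finset.univ) :
    ∃ C : ℝ, 0 ≤ C ∧ ∃ c : ℝ, 0 < c ∧
      (∀ t : ℝ, 0 ≤ t → ∀ x y : K, x ∈ H → y ∈ H →
        NormedSpace.exp (t • genH k H) x y ≤ C * Real.exp (-c * t)) ∧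
      (∀ t : ℝ, 0 ≤ t → ∀ x : K,
        (NormedSpace.exp (t • genH k H)).mulVec
          (fun y => if y ∈ H then (1 : ℝ) else 0) x ≤ C * Real.exp (-c * t)) := by
  haveI hKne : Nonempty K := Fintype.card_pos_iff.mp (by omega)
  obtain ⟨y0, hy0⟩ : ∃ y0, y0 ∉ H := by
    by_contra h
    push_neg at h
    exact hHproper (Finset.eq_univ_iff_forall.mpr h)
  set A := genH k H with hAdef
  -- row sums of `gen` vanish
  have hgenrow : ∀ x, ∑ y, gen k x y = 0 := by
    intro x
    rw [← Finset.add_sum_erase Finset.univ (fun y => gen k x y) (Finset.mem_univ x)]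
    have h1 : gen k x x = -∑ z ∈ Finset.univ.erase x, k x z := by simp [gen]
    have h2 : ∑ y ∈ Finset.univ.erase x, gen k x y = ∑ y ∈ Finset.univ.erase x, k x y := by
      refine Finset.sum_congr rfl fun y hy => ?_
      have hyx : y ≠ x := (Finset.mem_erase.mp hy).1
      simp only [gen, Matrix.of_apply, if_neg (show ¬ x = y from fun h => hyx h.symm)]
    rw [h1, h2]
    ring
  have hAentry : ∀ x y, A x y = if x ∈ H then gen k x y else 0 := by
    intro x y; rw [hAdef]; rfl
  have hArow : ∀ x, ∑ y, A x y = 0 := by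
    intro x
    by_cases hx : x ∈ H
    · simpa [hAentry, hx] using hgenrow x
    · simp [hAentry, hx]
  have hAzero : ∀ x, x ∉ H → ∀ y, A x y = 0 := by
    intro x hx y; simp [hAentry, hx]
  -- rate sums
  have hks : ∀ x, 0 ≤ ∑ z ∈ Finset.univ.erase x, k x z := by
    intro x
    refine Finset.sum_nonneg fun z hz => hk x z ?_
    exact fun h => (Finset.mem_erase.mp hz).1 h.symm
  set m : ℝ := 1 + ∑ x, ∑ z ∈ Finset.univ.erase x, k x z with hmdef
  have hmbig : ∀ x, ∑ z ∈ Finset.univ.erase x, k x z + 1 ≤ m := by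
    intro x
    have := Finset.single_le_sum (f := fun x => ∑ z ∈ Finset.univ.erase x, k x z)
      (fun i _ => hks i) (Finset.mem_univ x)
    rw [hmdef]; linarith
  set M : Matrix K K ℝ := A + m • (1 : Matrix K K ℝ) with hMdef
  have hMentry : ∀ x y, M x y = A x y + m * (1 : Matrix K K ℝ) x y := by
    intro x y; simp [hMdef, Matrix.add_apply, Matrix.smul_apply, smul_eq_mul]
  have hMdiag : ∀ x, 0 < M x x := by
    intro x
    rw [hMentry, Matrix.one_apply_eq, mul_one]
    by_cases hx : x ∈ H
    · have : A x x = -∑ z ∈ Finset.univ.erase x, k x z := by simp [hAentry, hx, gen]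
      rw [this]
      have := hmbig x
      linarith
    · rw [hAzero x hx x]; have := hmbig x; have := hks x; linarith
  have hMnn : ∀ x y, 0 ≤ M x y := by
    intro x y
    by_cases hxy : x = y
    · exact hxy ▸ (hMdiag x).le
    · rw [hMentry, Matrix.one_apply_ne hxy, mul_zero, add_zero]
      by_cases hx : x ∈ H
      · have : A x y = k x y := by simp [hAentry, hx, gen, hxy]
        rw [this]; exact hk x y hxy
      · rw [hAzero x hx y]
  have hMarc : ∀ a ∈ H, ∀ b, 0 < k a b → 0 < M a b := by
    intro a ha b hab
    by_cases hxy : a = b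
    · exact hxy ▸ hMdiag a
    · have : M a b = k a b := by
        rw [hMentry, Matrix.one_apply_ne hxy, mul_zero, add_zero]
        simp [hAentry, ha, gen, hxy]
      rw [this]; exact hab
  -- scaling identity
  have hscale : ∀ t : ℝ, NormedSpace.exp (t • M)
      = Real.exp (t * m) • NormedSpace.exp (t • A) := by
    intro t
    have h1 : t • M = t • A + (t * m) • (1 : Matrix K K ℝ) := by
      rw [hMdef, smul_add, smul_smul]
    rw [h1, Matrix.exp_add_of_commute _ _ ((Commute.one_right (t • A)).smul_right (t * m)),
      exp_smul_one, mul_smul_comm, mul_one]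
  have hEnn : ∀ t : ℝ, 0 ≤ t → ∀ x y, 0 ≤ NormedSpace.exp (t • A) x y := by
    intro t ht x y
    have hMt : ∀ a b, 0 ≤ (t • M) a b := by
      intro a b
      rw [Matrix.smul_apply, smul_eq_mul]
      exact mul_nonneg ht (hMnn a b)
    have h1 := exp_entry_nonneg hMt x y
    rw [hscale t, Matrix.smul_apply, smul_eq_mul] at h1
    have h2 : (0:ℝ) < Real.exp (t * m) := Real.exp_pos _
    by_contra h
    push_neg at h
    nlinarith
  have hrowE : ∀ t : ℝ, ∀ x : K, ∑ y, NormedSpace.exp (t • A) x y = 1 := by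
    intro t x
    refine exp_rowsum_one (fun x' => ?_) x
    simp only [Matrix.smul_apply, smul_eq_mul, ← Finset.mul_sum, hArow, mul_zero]
  have hEout : ∀ t : ℝ, ∀ x, x ∉ H → ∀ y,
      NormedSpace.exp (t • A) x y = (1 : Matrix K K ℝ) x y := by
    intro t x hx y
    refine exp_zero_row (fun y' => ?_) y
    rw [Matrix.smul_apply, hAzero x hx y', smul_zero]
  have hEpos1 : ∀ x ∈ H, ∃ z, z ∉ H ∧ 0 < NormedSpace.exp ((1:ℝ) • A) x z := by
    intro x hx
    obtain ⟨n, z, hz, hpos⟩ := reach_pos k H M hMnn hMdiag hMarc x y0 (hirr x y0) hy0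
    have h1 : 0 < NormedSpace.exp ((1:ℝ) • M) x z := by
      rw [one_smul]; exact exp_entry_pos hMnn hpos
    rw [hscale 1, Matrix.smul_apply, smul_eq_mul] at h1
    have h2 : (0:ℝ) < Real.exp (1 * m) := Real.exp_pos _
    refine ⟨z, hz, ?_⟩
    by_contra h
    push_neg at h
    nlinarith
  -- the escape function g
  set g : ℝ → K → ℝ := fun t x =>
    ∑ y, NormedSpace.exp (t • A) x y * (if y ∈ H then (1:ℝ) else 0) with hgdef
  have hg0 : ∀ t : ℝ, 0 ≤ t → ∀ x, 0 ≤ g t x := by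
    intro t ht x
    simp only [hgdef]
    refine Finset.sum_nonneg fun y _ => mul_nonneg (hEnn t ht x y) ?_
    split <;> norm_num
  have hg1 : ∀ t : ℝ, 0 ≤ t → ∀ x, g t x ≤ 1 := by
    intro t ht x
    calc g t x ≤ ∑ y, NormedSpace.exp (t • A) x y := by
          simp only [hgdef]
          refine Finset.sum_le_sum fun y _ => ?_
          refine mul_le_of_le_one_right (hEnn t ht x y) ?_
          split <;> norm_num
      _ = 1 := hrowE t x
  have hgout : ∀ t : ℝ, ∀ x, x ∉ H → g t x = 0 := by
    intro t x hx
    simp only [hgdef]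
    rw [Finset.sum_congr rfl fun y _ => by rw [hEout t x hx y]]
    simp [Matrix.one_apply, hx]
  have hentry_le : ∀ t : ℝ, 0 ≤ t → ∀ x y, y ∈ H →
      NormedSpace.exp (t • A) x y ≤ g t x := by
    intro t ht x y hy
    have h1 := Finset.single_le_sum
      (f := fun y' => NormedSpace.exp (t • A) x y' * (if y' ∈ H then (1:ℝ) else 0))
      (fun y' _ => mul_nonneg (hEnn t ht x y') (by split <;> norm_num)) (Finset.mem_univ y)
    simp only [hgdef]
    simpa [hy] using h1
  -- contraction constant
  set θ : ℝ := Finset.univ.sup' Finset.univ_nonempty (g 1) with hθdef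
  have hθlt : θ < 1 := by
    rw [hθdef, Finset.sup'_lt_iff]
    intro x _
    by_cases hx : x ∈ H
    · obtain ⟨z, hz, hpos⟩ := hEpos1 x hx
      have h1 : g 1 x < ∑ y, NormedSpace.exp ((1:ℝ) • A) x y := by
        refine Finset.sum_lt_sum (fun y _ => mul_le_of_le_one_right
          (hEnn 1 zero_le_one x y) (by split <;> norm_num)) ⟨z, Finset.mem_univ z, ?_⟩
        simpa [hz] using hpos
      rw [hrowE 1 x] at h1
      exact h1
    · rw [hgout 1 x hx]; norm_num
  set θ' : ℝ := max θ (1/2) with hθ'def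
  have hθ'pos : (0:ℝ) < θ' := lt_of_lt_of_le (by norm_num) (le_max_right θ (1/2))
  have hθ'lt : θ' < 1 := max_lt hθlt (by norm_num)
  have hg1le : ∀ y, g 1 y ≤ θ' * (if y ∈ H then (1:ℝ) else 0) := by
    intro y
    by_cases hy : y ∈ H
    · simp only [hy, if_pos, mul_one]
      exact le_trans (Finset.le_sup' (g 1) (Finset.mem_univ y)) (le_max_left θ (1/2))
    · rw [hgout 1 y hy, if_neg hy, mul_zero]
  -- semigroup property
  have hsemi : ∀ s t : ℝ, NormedSpace.exp ((s + t) • A)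
      = NormedSpace.exp (s • A) * NormedSpace.exp (t • A) := by
    intro s t
    rw [add_smul]
    exact Matrix.exp_add_of_commute _ _ (((Commute.refl A).smul_left s).smul_right t)
  have hstep : ∀ s : ℝ, 0 ≤ s → ∀ x, g (s + 1) x ≤ θ' * g s x := by
    intro s hs x
    have hmul : g (s + 1) x = ∑ l, NormedSpace.exp (s • A) x l * g 1 l := by
      simp only [hgdef]
      rw [hsemi s 1]
      simp only [Matrix.mul_apply, Finset.sum_mul]
      rw [Finset.sum_comm]
      simp only [Finset.mul_sum, mul_assoc]
    rw [hmul]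
    calc ∑ l, NormedSpace.exp (s • A) x l * g 1 l
        ≤ ∑ l, NormedSpace.exp (s • A) x l * (θ' * (if l ∈ H then (1:ℝ) else 0)) :=
          Finset.sum_le_sum fun l _ =>
            mul_le_mul_of_nonneg_left (hg1le l) (hEnn s hs x l)
      _ = θ' * g s x := by
          simp only [hgdef]
          rw [Finset.mul_sum]
          exact Finset.sum_congr rfl fun l _ => by ring
  have hiter : ∀ n : ℕ, ∀ s : ℝ, 0 ≤ s → ∀ x, g (s + n) x ≤ θ' ^ n := by
    intro n
    induction n with
    | zero => intro s hs x; simpa using hg1 s hs x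
    | succ n ih =>
      intro s hs x
      have h1 : s + ((n:ℝ) + 1) = (s + n) + 1 := by ring
      push_cast
      rw [h1]
      calc g ((s + n) + 1) x ≤ θ' * g (s + n) x := hstep (s + n) (by positivity) x
        _ ≤ θ' * θ' ^ n := mul_le_mul_of_nonneg_left (ih s hs x) hθ'pos.le
        _ = θ' ^ (n + 1) := (pow_succ' θ' n).symm
  have hL : Real.log θ' < 0 := Real.log_neg hθ'pos hθ'lt
  have hdecay : ∀ t : ℝ, 0 ≤ t → ∀ x, g t x ≤ 2 * Real.exp (Real.log θ' * t) := by
    intro t ht x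
    have h0 : g t x ≤ θ' ^ (Nat.floor t) := by
      have h1 := hiter (Nat.floor t) (t - Nat.floor t)
        (sub_nonneg.mpr (Nat.floor_le ht)) x
      simpa [sub_add_cancel] using h1
    have hfloor : (t - 1 : ℝ) < (Nat.floor t : ℝ) := Nat.sub_one_lt_floor t
    have hpowlog : θ' ^ (Nat.floor t) = Real.exp ((Nat.floor t : ℝ) * Real.log θ') := by
      rw [Real.exp_nat_mul, Real.exp_log hθ'pos]
    have hmono : Real.exp ((Nat.floor t : ℝ) * Real.log θ')
        ≤ Real.exp ((t - 1) * Real.log θ') := by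
      apply Real.exp_le_exp.mpr
      nlinarith
    have hsplit : Real.exp ((t - 1) * Real.log θ')
        = Real.exp (-Real.log θ') * Real.exp (Real.log θ' * t) := by
      rw [← Real.exp_add]; ring_nf
    have hinv : Real.exp (-Real.log θ') ≤ 2 := by
      rw [Real.exp_neg, Real.exp_log hθ'pos]
      have h2 : (1:ℝ)/2 ≤ θ' := le_max_right θ (1/2)
      have h3 : θ'⁻¹ * θ' = 1 := inv_mul_cancel₀ hθ'pos.ne'
      nlinarith
    calc g t x ≤ θ' ^ (Nat.floor t) := h0
      _ = Real.exp ((Nat.floor t : ℝ) * Real.log θ') := hpowlog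
      _ ≤ Real.exp ((t - 1) * Real.log θ') := hmono
      _ = Real.exp (-Real.log θ') * Real.exp (Real.log θ' * t) := hsplit
      _ ≤ 2 * Real.exp (Real.log θ' * t) :=
          mul_le_mul_of_nonneg_right hinv (Real.exp_pos _).le
  refine ⟨2, by norm_num, -Real.log θ', by linarith, ?_, ?_⟩
  · intro t ht x y hx hy
    have h1 : NormedSpace.exp (t • A) x y ≤ g t x := hentry_le t ht x y hy
    have h2 := hdecay t ht x
    have h3 : -(-Real.log θ') * t = Real.log θ' * t := by ring
    rw [h3]
    linarith
  · intro t ht x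
    have h1 : (NormedSpace.exp (t • A)).mulVec
        (fun y => if y ∈ H then (1:ℝ) else 0) x = g t x := by
      simp only [hgdef]
      simp [Matrix.mulVec, dotProduct]
    rw [h1]
    have h2 := hdecay t ht x
    have h3 : -(-Real.log θ') * t = Real.log θ' * t := by ring
    rw [h3]
    linarith
end

section
/- Let f : K → ℝ be centered, i.e. ⟨f⟩^s = 0. Then for every x ∈ K the integral V(x) = ∫₀^∞ (e^{tL} f)(x) dt converges, the function V satisfies the Poisson equation LV(x) + f(x) = 0 for all x ∈ K, and ⟨V⟩^s = 0. -/
open scoped Classical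


namespace QPaux

open Matrix NormedSpace

attribute [local instance] Matrix.linftyOpSemiNormedRing Matrix.linftyOpNormedRing
  Matrix.linftyOpNormedAlgebra

variable {K : Type*} [Fintype K] [DecidableEq K]

section maps

variable {W : Type*} [NormedAddCommGroup W] [NormedSpace ℝ W]

lemma summable_map_exp (φ : Matrix K K ℝ →ₗ[ℝ] W) (A : Matrix K K ℝ) :
    Summable fun n : ℕ => ((n.factorial : ℝ))⁻¹ • φ (A ^ n) := by
  have h := NormedSpace.expSeries_summable' (𝕂 := ℝ) A
  have := h.map (LinearMap.toContinuousLinearMap φ : Matrix K K ℝ →L[ℝ] W)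
    (LinearMap.toContinuousLinearMap φ).continuous
  simpa [Function.comp_def, _root_.map_smul] using this

lemma map_exp (φ : Matrix K K ℝ →ₗ[ℝ] W) (A : Matrix K K ℝ) :
    φ (exp A) = ∑' n : ℕ, ((n.factorial : ℝ))⁻¹ • φ (A ^ n) := by
  rw [exp_eq_tsum (𝕂 := ℝ)]
  have h := NormedSpace.expSeries_summable' (𝕂 := ℝ) A
  have := (LinearMap.toContinuousLinearMap φ).map_tsum h
  simp only [LinearMap.coe_toContinuousLinearMap'] at this
  simp only [this, _root_.map_smul]

lemma map_exp_eq_of_pow_zero (φ : Matrix K K ℝ →ₗ[ℝ] W) (A : Matrix K K ℝ)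
    (h : ∀ n : ℕ, 1 ≤ n → φ (A ^ n) = 0) : φ (exp A) = φ 1 := by
  rw [map_exp φ A, tsum_eq_single 0]
  · simp
  · intro n hn
    rw [h n (Nat.one_le_iff_ne_zero.2 hn), smul_zero]

end maps

/-- evaluation of a matrix entry as a linear map -/
def entryLM (x y : K) : Matrix K K ℝ →ₗ[ℝ] ℝ where
  toFun A := A x y
  map_add' := by intros; simp
  map_smul' := by intros; simp

/-- row sum as a linear map -/
def rowSumLM (x : K) : Matrix K K ℝ →ₗ[ℝ] ℝ where
  toFun A := ∑ y, A x y
  map_add' := by intros; simp [Finset.sum_add_distrib]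
  map_smul' := by intros; simp [Finset.mul_sum]

/-- left multiplication by a row vector as a linear map -/
def vecMulLM (ρ : K → ℝ) : Matrix K K ℝ →ₗ[ℝ] (K → ℝ) where
  toFun A := ρ ᵥ* A
  map_add' := by intros; simp [Matrix.vecMul_add]
  map_smul' := by
    intro c A
    funext i
    simp [Matrix.vecMul, dotProduct, Finset.mul_sum, Matrix.smul_apply, mul_left_comm]

lemma exp_entry (A : Matrix K K ℝ) (x y : K) :
    exp A x y = ∑' n : ℕ, ((n.factorial : ℝ))⁻¹ * (A ^ n) x y := by
  exact map_exp (entryLM x y) A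

lemma summable_exp_entry (A : Matrix K K ℝ) (x y : K) :
    Summable fun n : ℕ => ((n.factorial : ℝ))⁻¹ * (A ^ n) x y := by
  exact summable_map_exp (entryLM x y) A

lemma pow_entry_nonneg {A : Matrix K K ℝ} (hA : ∀ x y, 0 ≤ A x y) (n : ℕ) :
    ∀ x y, 0 ≤ (A ^ n) x y := by
  induction n with
  | zero =>
    intro x y
    simp only [pow_zero]
    by_cases h : x = y <;> simp [Matrix.one_apply, h]
  | succ n ih =>
    intro x y
    rw [pow_succ, Matrix.mul_apply]
    exact Finset.sum_nonneg fun z _ => mul_nonneg (ih x z) (hA z y)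

lemma exp_entry_nonneg {A : Matrix K K ℝ} (hA : ∀ x y, 0 ≤ A x y) (x y : K) :
    0 ≤ exp A x y := by
  rw [exp_entry]
  exact tsum_nonneg fun n => mul_nonneg (by positivity) (pow_entry_nonneg hA n x y)

lemma le_exp_entry {A : Matrix K K ℝ} (hA : ∀ x y, 0 ≤ A x y) (m : ℕ) (x y : K) :
    ((m.factorial : ℝ))⁻¹ * (A ^ m) x y ≤ exp A x y := by
  rw [exp_entry]
  exact Summable.le_tsum (summable_exp_entry A x y) m
    fun n _ => mul_nonneg (by positivity) (pow_entry_nonneg hA n x y)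

lemma exp_entry_pos {A : Matrix K K ℝ} (hA : ∀ x y, 0 ≤ A x y) {x y : K} {m : ℕ}
    (hm : 0 < (A ^ m) x y) : 0 < exp A x y := by
  refine lt_of_lt_of_le ?_ (le_exp_entry hA m x y)
  positivity

lemma rowsum_exp {A : Matrix K K ℝ} (hA : ∀ x, ∑ y, A x y = 0) (x : K) :
    ∑ y, exp A x y = 1 := by
  have key : ∀ n : ℕ, 1 ≤ n → rowSumLM x (A ^ n) = 0 := by
    intro n hn
    obtain ⟨m, rfl⟩ := Nat.exists_eq_add_of_le hn
    simp only [rowSumLM, LinearMap.coe_mk, AddHom.coe_mk]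
    rw [add_comm, pow_succ]
    have : ∀ y, (A ^ m * A) x y = ∑ z, (A ^ m) x z * A z y := fun y => Matrix.mul_apply
    simp only [this]
    rw [Finset.sum_comm]
    simp only [← Finset.mul_sum, hA, mul_zero, Finset.sum_const_zero]
  have := map_exp_eq_of_pow_zero (rowSumLM x) A key
  simpa [rowSumLM, Matrix.one_apply, Finset.sum_ite_eq] using this

lemma vecMul_exp {ρ : K → ℝ} {A : Matrix K K ℝ} (h : ρ ᵥ* A = 0) :
    ρ ᵥ* exp A = ρ := by
  have key : ∀ n : ℕ, 1 ≤ n → vecMulLM ρ (A ^ n) = 0 := by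
    intro n hn
    induction n with
    | zero => omega
    | succ m ih =>
      simp only [vecMulLM, LinearMap.coe_mk, AddHom.coe_mk] at ih ⊢
      rcases Nat.eq_or_lt_of_le hn with h1 | h1
      · rw [← h1, pow_one]; exact h
      · rw [pow_succ, ← Matrix.vecMul_vecMul, ih (by omega)]
        exact Matrix.zero_vecMul A
  have := map_exp_eq_of_pow_zero (vecMulLM ρ) A key
  simpa [vecMulLM, Matrix.vecMul_one] using this

end QPaux
namespace QPaux2
open Matrix NormedSpace

attribute [local instance] Matrix.linftyOpSemiNormedRing Matrix.linftyOpNormedRing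
  Matrix.linftyOpNormedAlgebra

variable {K : Type*} [Fintype K] [DecidableEq K]

lemma exp_smul_one (r : ℝ) :
    exp (r • (1 : Matrix K K ℝ)) = Real.exp r • (1 : Matrix K K ℝ) := by
  have h1 : r • (1 : Matrix K K ℝ) = algebraMap ℝ (Matrix K K ℝ) r :=
    (Algebra.algebraMap_eq_smul_one r).symm
  have h2 := algebraMap_exp_comm (𝕂 := ℝ) (𝔸 := Matrix K K ℝ) r
  rw [h1]
  convert h2.symm using 1
  · congr 1
  rw [← Real.exp_eq_exp_ℝ, Algebra.algebraMap_eq_smul_one]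

lemma exp_smul_add_comm (A : Matrix K K ℝ) (s t : ℝ) :
    exp ((s + t) • A) = exp (s • A) * exp (t • A) := by
  rw [add_smul]
  exact Matrix.exp_add_of_commute _ _ (((Commute.refl A).smul_left s).smul_right t)

lemma exp_smul_decomp (A : Matrix K K ℝ) (c t : ℝ) :
    exp (t • A) = Real.exp (-(t * c)) • exp (t • (A + c • (1 : Matrix K K ℝ))) := by
  have h : t • A = (-(t * c)) • (1 : Matrix K K ℝ) + t • (A + c • (1 : Matrix K K ℝ)) := by
    module
  rw [h, Matrix.exp_add_of_commute _ _
    ((Commute.one_left _).smul_left (-(t * c))), exp_smul_one, smul_mul_assoc, one_mul]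

lemma exp_nat_smul (A : Matrix K K ℝ) (n : ℕ) :
    exp ((n : ℝ) • A) = exp A ^ n := by
  rw [Nat.cast_smul_eq_nsmul]
  exact Matrix.exp_nsmul n A

lemma stoch_bound {P : Matrix K K ℝ} (hP : ∀ x y, 0 ≤ P x y)
    (hrow : ∀ x, ∑ y, P x y = 1) {v : K → ℝ} {B : ℝ} (hv : ∀ y, |v y| ≤ B) (x : K) :
    |(P *ᵥ v) x| ≤ B := by
  have h1 : (P *ᵥ v) x = ∑ y, P x y * v y := by simp [Matrix.mulVec, dotProduct]
  rw [h1]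
  calc |∑ y, P x y * v y| ≤ ∑ y, |P x y * v y| := Finset.abs_sum_le_sum_abs _ _
    _ ≤ ∑ y, P x y * B := by
        refine Finset.sum_le_sum fun y _ => ?_
        rw [abs_mul, abs_of_nonneg (hP x y)]
        exact mul_le_mul_of_nonneg_left (hv y) (hP x y)
    _ = B := by rw [← Finset.sum_mul, hrow, one_mul]

lemma doeblin [Nonempty K] {P : Matrix K K ℝ} {ρ : K → ℝ} {δ : ℝ} (hδ : 0 ≤ δ)
    (hPδ : ∀ x y, δ * ρ y ≤ P x y) (hrow : ∀ x, ∑ y, P x y = 1) (hρsum : ∑ y, ρ y = 1)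
    {v : K → ℝ} {B : ℝ} (hv : ∀ y, |v y| ≤ B) (hvc : ∑ y, ρ y * v y = 0) (x : K) :
    |(P *ᵥ v) x| ≤ (1 - δ) * B := by
  have hB : 0 ≤ B := le_trans (abs_nonneg _) (hv (Classical.arbitrary K))
  have h1 : (P *ᵥ v) x = ∑ y, (P x y - δ * ρ y) * v y := by
    simp only [Matrix.mulVec, dotProduct, sub_mul, Finset.sum_sub_distrib, mul_assoc,
      ← Finset.mul_sum, hvc, mul_zero, sub_zero]
  rw [h1]
  calc |∑ y, (P x y - δ * ρ y) * v y| ≤ ∑ y, |(P x y - δ * ρ y) * v y| :=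
        Finset.abs_sum_le_sum_abs _ _
    _ ≤ ∑ y, (P x y - δ * ρ y) * B := by
        refine Finset.sum_le_sum fun y _ => ?_
        have hnn : 0 ≤ P x y - δ * ρ y := sub_nonneg.2 (hPδ x y)
        rw [abs_mul, abs_of_nonneg hnn]
        exact mul_le_mul_of_nonneg_left (hv y) hnn
    _ = (1 - δ) * B := by
        have h2 : ∑ y, (P x y - δ * ρ y) * B = ∑ y, P x y * B - ∑ y, δ * ρ y * B := by
          rw [← Finset.sum_sub_distrib]
          exact Finset.sum_congr rfl fun y _ => by ring
        have h3 : ∑ y, δ * ρ y * B = δ * B := by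
          simp only [mul_assoc, ← Finset.mul_sum, ← Finset.sum_mul, hρsum, one_mul]
        have h4 : ∑ y, P x y * B = B := by rw [← Finset.sum_mul, hrow, one_mul]
        rw [h2, h3, h4]; ring

lemma pow_pos_of_path {M : Matrix K K ℝ} {k : K → K → ℝ}
    (hM0 : ∀ x y, 0 ≤ M x y) (hMd : ∀ x, 0 < M x x)
    (hMk : ∀ a b, a ≠ b → k a b ≤ M a b) {x y : K}
    (h : Relation.ReflTransGen (fun a b => 0 < k a b) x y) :
    ∃ m : ℕ, 0 < (M ^ m) x y := by
  induction h with
  | refl => exact ⟨0, by simp [Matrix.one_apply]⟩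
  | @tail b c hab hbc ih =>
    obtain ⟨m, hm⟩ := ih
    refine ⟨m + 1, ?_⟩
    have hMbc : 0 < M b c := by
      by_cases hbc' : b = c
      · subst hbc'; exact hMd b
      · exact lt_of_lt_of_le hbc (hMk b c hbc')
    have hterm : 0 < (M ^ m) x b * M b c := mul_pos hm hMbc
    have hle : (M ^ m) x b * M b c ≤ ∑ z, (M ^ m) x z * M z c := by
      refine Finset.single_le_sum (f := fun z => (M ^ m) x z * M z c)
        (fun z _ => mul_nonneg (QPaux.pow_entry_nonneg hM0 m x z) (hM0 z c))
        (Finset.mem_univ b)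
    rw [pow_succ, Matrix.mul_apply]
    exact lt_of_lt_of_le hterm hle

lemma hasDerivAt_mulVec_exp (A : Matrix K K ℝ) (f : K → ℝ) (x : K) (t : ℝ) :
    HasDerivAt (fun s : ℝ => ((exp (s • A)) *ᵥ f) x)
      (((A * exp (t • A)) *ᵥ f) x) t := by
  let φ : Matrix K K ℝ →ₗ[ℝ] ℝ :=
    { toFun := fun B => (B *ᵥ f) x
      map_add' := fun B C => by simp [Matrix.add_mulVec]
      map_smul' := fun c B => by simp [Matrix.smul_mulVec] }
  have h := hasDerivAt_exp_smul_const' (𝕂 := ℝ) A t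
  have h2 := (LinearMap.toContinuousLinearMap φ).hasFDerivAt.comp_hasDerivAt t h
  exact h2

lemma gen_row_sum (k : K → K → ℝ) (x : K) : ∑ y, gen k x y = 0 := by
  rw [← Finset.add_sum_erase Finset.univ _ (Finset.mem_univ x)]
  have h2 : ∀ y ∈ Finset.univ.erase x, gen k x y = k x y := by
    intro y hy
    have hne : ¬ (x = y) := fun h => (Finset.ne_of_mem_erase hy) h.symm
    simp [gen, hne]
  rw [Finset.sum_congr rfl h2]
  simp [gen]

end QPaux2
open scoped Matrix
/-- For a centered `f`, the accumulated excess `V(x) = ∫₀^∞ (e^{tL} f)(x) dt` converges, solves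
the Poisson equation `LV + f = 0`, and is centered: `⟨V⟩ˢ = 0`. -/
theorem quasipotential_integral_solves_poisson
    {K : Type*} [Fintype K] [DecidableEq K] [Nonempty K]
    (k : K → K → ℝ) (hk : ∀ x y : K, x ≠ y → 0 ≤ k x y)
    (hirr : StronglyConnected k)
    (ρ : K → ℝ) (hρpos : ∀ x, 0 < ρ x) (hρsum : ∑ x, ρ x = 1)
    (hρstat : Matrix.vecMul ρ (gen k) = 0)
    (f : K → ℝ) (hf : ∑ x, f x * ρ x = 0)
    (V : K → ℝ)
    (hV : ∀ x, V x = ∫ t in Set.Ioi (0 : ℝ), (NormedSpace.exp (t • gen k)).mulVec f x) :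
    (∀ x, MeasureTheory.IntegrableOn
        (fun t : ℝ => (NormedSpace.exp (t • gen k)).mulVec f x) (Set.Ioi 0)) ∧
    (∀ x, (∑ y, k x y * (V y - V x)) + f x = 0) ∧
    (∑ x, V x * ρ x = 0) := by
  classical
  set L : Matrix K K ℝ := gen k with hL
  set P : ℝ → Matrix K K ℝ := fun t => NormedSpace.exp (t • L) with hPdef
  have hrowL : ∀ x, ∑ y, L x y = 0 := QPaux2.gen_row_sum k
  have hV' : ∀ x, V x = ∫ t in Set.Ioi (0 : ℝ), (P t *ᵥ f) x := hV
  -- the auxiliary nonnegative matrix M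
  set E : K → ℝ := fun x => ∑ z ∈ Finset.univ.erase x, k x z with hE
  have hEnn : ∀ x, 0 ≤ E x := fun x =>
    Finset.sum_nonneg fun z hz => hk x z (fun h => (Finset.ne_of_mem_erase hz) h.symm)
  set c : ℝ := 1 + ∑ x, E x with hc
  have hc_ge : ∀ x, E x + 1 ≤ c := by
    intro x
    have h1 : E x ≤ ∑ x', E x' :=
      Finset.single_le_sum (fun x' _ => hEnn x') (Finset.mem_univ x)
    rw [hc]; linarith
  set M : Matrix K K ℝ := L + c • (1 : Matrix K K ℝ) with hM
  have hLdiag : ∀ x, L x x = -(E x) := by intro x; simp [hL, gen, hE]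
  have hLoff : ∀ x y, x ≠ y → L x y = k x y := by
    intro x y hxy; simp [hL, gen, hxy]
  have hMdiag : ∀ x, 0 < M x x := by
    intro x
    have h1 : M x x = -(E x) + c := by
      rw [hM, Matrix.add_apply, Matrix.smul_apply, Matrix.one_apply_eq, hLdiag, smul_eq_mul,
        mul_one]
    rw [h1]
    have := hc_ge x; linarith
  have hMoff : ∀ x y, x ≠ y → M x y = k x y := by
    intro x y hxy
    rw [hM, Matrix.add_apply, Matrix.smul_apply, Matrix.one_apply_ne hxy, hLoff x y hxy,
      smul_eq_mul, mul_zero, add_zero]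
  have hMnn : ∀ x y, 0 ≤ M x y := by
    intro x y
    by_cases h : x = y
    · subst h; exact (hMdiag x).le
    · rw [hMoff x y h]; exact hk x y h
  -- decomposition and positivity
  have hdecomp : ∀ t : ℝ, P t = Real.exp (-(t * c)) • NormedSpace.exp (t • M) := by
    intro t
    rw [hPdef]
    simpa [← hM] using QPaux2.exp_smul_decomp L c t
  have hPnn : ∀ t : ℝ, 0 ≤ t → ∀ x y, 0 ≤ P t x y := by
    intro t ht x y
    rw [hdecomp t, Matrix.smul_apply, smul_eq_mul]
    have h1 : ∀ a b, 0 ≤ (t • M) a b := fun a b => by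
      rw [Matrix.smul_apply, smul_eq_mul]; exact mul_nonneg ht (hMnn a b)
    exact mul_nonneg (Real.exp_nonneg _) (QPaux.exp_entry_nonneg h1 x y)
  have hProw : ∀ t : ℝ, ∀ x, ∑ y, P t x y = 1 := by
    intro t x
    apply QPaux.rowsum_exp
    intro a
    simp only [Matrix.smul_apply, smul_eq_mul, ← Finset.mul_sum, hrowL, mul_zero]
  have hppos : ∀ x y, 0 < P 1 x y := by
    intro x y
    rw [hdecomp 1, Matrix.smul_apply, smul_eq_mul, one_smul]
    obtain ⟨m, hm⟩ := QPaux2.pow_pos_of_path hMnn hMdiag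
      (fun a b hab => le_of_eq (hMoff a b hab).symm) (hirr x y)
    exact mul_pos (Real.exp_pos _) (QPaux.exp_entry_pos hMnn hm)
  -- Doeblin constant
  set δ : ℝ := (Finset.univ.inf' Finset.univ_nonempty
      (fun p : K × K => P 1 p.1 p.2 / ρ p.2)) / 2 with hδdef
  have hδpos : 0 < δ := by
    apply div_pos _ two_pos
    rw [Finset.lt_inf'_iff]
    intro p _
    exact div_pos (hppos p.1 p.2) (hρpos p.2)
  have hδρ2 : ∀ x y, (2 * δ) * ρ y ≤ P 1 x y := by
    intro x y
    have h1 : Finset.univ.inf' Finset.univ_nonempty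
        (fun p : K × K => P 1 p.1 p.2 / ρ p.2) ≤ P 1 x y / ρ y :=
      Finset.inf'_le _ (Finset.mem_univ (x, y))
    have h2 : 2 * δ ≤ P 1 x y / ρ y := by rw [hδdef]; linarith
    exact (le_div_iff₀ (hρpos y)).1 h2
  have hδρ : ∀ x y, δ * ρ y ≤ P 1 x y := by
    intro x y
    refine le_trans ?_ (hδρ2 x y)
    have := (hρpos y).le
    nlinarith
  have h2δ : 2 * δ ≤ 1 := by
    obtain ⟨x0⟩ := (inferInstance : Nonempty K)
    have hs := Finset.sum_le_sum (fun y (_ : y ∈ Finset.univ) => hδρ2 x0 y)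
    rw [← Finset.mul_sum, hρsum, mul_one, hProw 1 x0] at hs
    exact hs
  set r : ℝ := 1 - δ with hr
  have hr0 : 0 < r := by rw [hr]; linarith
  have hr1 : r < 1 := by rw [hr]; linarith
  -- stationarity and centering are preserved
  have hvecMul : ∀ t : ℝ, ρ ᵥ* P t = ρ := by
    intro t
    apply QPaux.vecMul_exp
    funext y
    have h0 : ∑ z, ρ z * L z y = 0 := by
      have := congrFun hρstat y
      simpa [Matrix.vecMul, dotProduct] using this
    simp only [Matrix.vecMul, dotProduct, Matrix.smul_apply, smul_eq_mul, Pi.zero_apply]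
    calc ∑ z, ρ z * (t * L z y) = t * ∑ z, ρ z * L z y := by
          rw [Finset.mul_sum]; exact Finset.sum_congr rfl fun z _ => by ring
      _ = 0 := by rw [h0, mul_zero]
  have hcent : ∀ t : ℝ, ∑ y, ρ y * (P t *ᵥ f) y = 0 := by
    intro t
    have h1 : ∑ y, ρ y * (P t *ᵥ f) y = ρ ⬝ᵥ (P t *ᵥ f) := rfl
    rw [h1, Matrix.dotProduct_mulVec, hvecMul t]
    simpa [dotProduct, mul_comm] using hf
  -- sup bound on f
  set B : ℝ := Finset.univ.sup' Finset.univ_nonempty (fun y => |f y|) with hBdef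
  have hB : ∀ y, |f y| ≤ B := by
    intro y
    rw [hBdef]
    exact Finset.le_sup' (fun y => |f y|) (Finset.mem_univ y)
  have hB0 : 0 ≤ B := le_trans (abs_nonneg _) (hB (Classical.arbitrary K))
  -- semigroup identities
  have hsemi : ∀ s t : ℝ, P (s + t) = P s * P t := fun s t => QPaux2.exp_smul_add_comm L s t
  have hPnat : ∀ n : ℕ, P (n : ℝ) = (P 1) ^ n := by
    intro n
    have h1 := QPaux2.exp_nat_smul L n
    have h2 : P 1 = NormedSpace.exp L := by rw [hPdef]; simp
    rw [hPdef]
    simp only [h1, h2, one_smul]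
  -- geometric decay along integers
  have hiter : ∀ n : ℕ, ∀ x, |(((P 1) ^ n) *ᵥ f) x| ≤ r ^ n * B := by
    intro n
    induction n with
    | zero => intro x; simpa using hB x
    | succ n ih =>
      intro x
      have hc' : ∑ y, ρ y * (((P 1) ^ n) *ᵥ f) y = 0 := by
        have h0 := hcent (n : ℝ)
        rw [hPnat n] at h0
        exact h0
      have h1 := QPaux2.doeblin hδpos.le hδρ (hProw 1) hρsum ih hc' x
      have h2 : (P 1) *ᵥ (((P 1) ^ n) *ᵥ f) = ((P 1) ^ (n + 1)) *ᵥ f := by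
        rw [Matrix.mulVec_mulVec, ← pow_succ']
      rw [h2] at h1
      calc |(((P 1) ^ (n + 1)) *ᵥ f) x| ≤ (1 - δ) * (r ^ n * B) := h1
        _ = r ^ (n + 1) * B := by rw [← hr]; ring
  -- decay in continuous time
  have hbound : ∀ t : ℝ, 0 ≤ t → ∀ x, |(P t *ᵥ f) x| ≤ r ^ (⌊t⌋₊) * B := by
    intro t ht x
    have hsplit : P t = P (t - (⌊t⌋₊ : ℝ)) * P ((⌊t⌋₊ : ℝ)) := by
      rw [← hsemi]; congr 1; ring
    have hfr : 0 ≤ t - (⌊t⌋₊ : ℝ) := sub_nonneg.2 (Nat.floor_le ht)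
    rw [hsplit, ← Matrix.mulVec_mulVec]
    refine QPaux2.stoch_bound (hPnn _ hfr) (hProw _) ?_ x
    intro y
    have := hiter (⌊t⌋₊) y
    rw [← hPnat] at this
    exact this
  -- exponential dominating function
  set a : ℝ := -Real.log r with ha_def
  have ha : 0 < a := by
    rw [ha_def]
    exact neg_pos.2 (Real.log_neg hr0 hr1)
  set C : ℝ := B / r with hCdef
  have hC0 : 0 ≤ C := div_nonneg hB0 hr0.le
  have hdom : ∀ t : ℝ, 0 ≤ t → ∀ x, |(P t *ᵥ f) x| ≤ C * Real.exp (-(a * t)) := by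
    intro t ht x
    have hlog : Real.log r < 0 := Real.log_neg hr0 hr1
    have hfl : t - 1 < (⌊t⌋₊ : ℝ) := Nat.sub_one_lt_floor t
    have hmono : (⌊t⌋₊ : ℝ) * Real.log r ≤ (t - 1) * Real.log r := by nlinarith
    have h2 : r ^ (⌊t⌋₊) ≤ Real.exp (-(a * t)) / r := by
      calc r ^ (⌊t⌋₊) = Real.exp ((⌊t⌋₊ : ℝ) * Real.log r) := by
            rw [← Real.exp_log (pow_pos hr0 _), Real.log_pow]
        _ ≤ Real.exp ((t - 1) * Real.log r) := Real.exp_le_exp.2 hmono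
        _ = Real.exp (-(a * t)) / r := by
            rw [show (t - 1) * Real.log r = -(a * t) - Real.log r by rw [ha_def]; ring,
              Real.exp_sub, Real.exp_log hr0]
    calc |(P t *ᵥ f) x| ≤ r ^ (⌊t⌋₊) * B := hbound t ht x
      _ ≤ (Real.exp (-(a * t)) / r) * B := mul_le_mul_of_nonneg_right h2 hB0
      _ = C * Real.exp (-(a * t)) := by rw [hCdef]; ring
  -- differentiability and continuity
  have hderiv : ∀ x (t : ℝ), HasDerivAt (fun s : ℝ => (P s *ᵥ f) x)
      (((L * P t) *ᵥ f) x) t := by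
    intro x t
    exact QPaux2.hasDerivAt_mulVec_exp L f x t
  have hcont : ∀ x, Continuous (fun t : ℝ => (P t *ᵥ f) x) :=
    fun x => continuous_iff_continuousAt.2 fun t => (hderiv x t).continuousAt
  -- integrability (first conclusion)
  have hint : ∀ x, MeasureTheory.IntegrableOn (fun t : ℝ => (P t *ᵥ f) x) (Set.Ioi 0) := by
    intro x
    have hD : MeasureTheory.IntegrableOn (fun t : ℝ => C * Real.exp (-a * t)) (Set.Ioi 0) :=
      (exp_neg_integrableOn_Ioi 0 ha).const_mul C
    refine MeasureTheory.Integrable.mono hD ((hcont x).aestronglyMeasurable.restrict) ?_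
    refine (MeasureTheory.ae_restrict_iff' measurableSet_Ioi).2 (MeasureTheory.ae_of_all _ ?_)
    intro t ht
    have h1 := hdom t (le_of_lt ht) x
    rw [Real.norm_eq_abs, Real.norm_eq_abs]
    rw [abs_of_nonneg (by positivity : (0:ℝ) ≤ C * Real.exp (-a * t))]
    rw [neg_mul]
    exact h1
  -- vanishing at infinity
  have htend : ∀ x, Filter.Tendsto (fun t : ℝ => (P t *ᵥ f) x) Filter.atTop (nhds 0) := by
    intro x
    have hev : ∀ᶠ t : ℝ in Filter.atTop, ‖(P t *ᵥ f) x‖ ≤ C * Real.exp (-(a * t)) := by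
      refine Filter.eventually_atTop.2 ⟨0, fun t ht => ?_⟩
      simpa [Real.norm_eq_abs] using hdom t ht x
    have hlim : Filter.Tendsto (fun t : ℝ => C * Real.exp (-(a * t)))
        Filter.atTop (nhds 0) := by
      have h1 : Filter.Tendsto (fun t : ℝ => a * t) Filter.atTop Filter.atTop :=
        Filter.Tendsto.const_mul_atTop ha Filter.tendsto_id
      have h2 : Filter.Tendsto (fun t : ℝ => -(a * t)) Filter.atTop Filter.atBot :=
        Filter.tendsto_neg_atBot_iff.2 h1
      have h3 := Real.tendsto_exp_atBot.comp h2
      have h4 := h3.const_mul C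
      simpa using h4
    exact squeeze_zero_norm' hev hlim
  -- value at 0
  have hg0 : ∀ x, (P 0 *ᵥ f) x = f x := by
    intro x
    rw [hPdef]
    simp [Matrix.one_mulVec]
  -- integrability of the derivative
  have hderint : ∀ x, MeasureTheory.IntegrableOn
      (fun t : ℝ => ((L * P t) *ᵥ f) x) (Set.Ioi 0) := by
    intro x
    have heq : ∀ t : ℝ, ((L * P t) *ᵥ f) x = ∑ y, L x y * (P t *ᵥ f) y := by
      intro t
      rw [← Matrix.mulVec_mulVec]
      simp [Matrix.mulVec, dotProduct]
    simp only [heq]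
    exact MeasureTheory.integrable_finset_sum _ fun y _ => (hint y).const_mul _
  -- fundamental theorem of calculus on [0, ∞)
  have hFTC : ∀ x, (∫ t in Set.Ioi (0:ℝ), ((L * P t) *ᵥ f) x) = -f x := by
    intro x
    have h1 := MeasureTheory.integral_Ioi_of_hasDerivAt_of_tendsto
      ((hcont x).continuousWithinAt) (fun t _ => hderiv x t) (hderint x) (htend x)
    rw [hg0 x] at h1
    rw [h1]; ring
  refine ⟨hint, ?_, ?_⟩
  · -- Poisson equation
    intro x
    have h1 : ∑ y, k x y * (V y - V x) = ∑ y, L x y * V y := by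
      rw [← Finset.add_sum_erase Finset.univ (fun y => k x y * (V y - V x)) (Finset.mem_univ x),
        ← Finset.add_sum_erase Finset.univ (fun y => L x y * V y) (Finset.mem_univ x)]
      have e1 : ∀ y ∈ Finset.univ.erase x, L x y * V y = k x y * V y := by
        intro y hy
        rw [hLoff x y (fun h => (Finset.ne_of_mem_erase hy) h.symm)]
      rw [Finset.sum_congr rfl e1, hLdiag, hE]
      simp only [sub_self, mul_zero, zero_add]
      have e2 : ∑ y ∈ Finset.univ.erase x, k x y * (V y - V x)
          = ∑ y ∈ Finset.univ.erase x, k x y * V y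
            - (∑ y ∈ Finset.univ.erase x, k x y) * V x := by
        rw [Finset.sum_mul, ← Finset.sum_sub_distrib]
        exact Finset.sum_congr rfl fun y _ => by ring
      rw [e2]; ring
    have h2 : ∑ y, L x y * V y = ∫ t in Set.Ioi (0:ℝ), ((L * P t) *ᵥ f) x := by
      have heq : ∀ t : ℝ, ((L * P t) *ᵥ f) x = ∑ y, L x y * (P t *ᵥ f) y := by
        intro t
        rw [← Matrix.mulVec_mulVec]
        simp [Matrix.mulVec, dotProduct]
      calc ∑ y, L x y * V y
          = ∑ y, ∫ t in Set.Ioi (0:ℝ), L x y * (P t *ᵥ f) y := by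
            refine Finset.sum_congr rfl fun y _ => ?_
            rw [hV' y, ← MeasureTheory.integral_const_mul]
        _ = ∫ t in Set.Ioi (0:ℝ), ∑ y, L x y * (P t *ᵥ f) y :=
            (MeasureTheory.integral_finset_sum _ fun y _ => (hint y).const_mul _).symm
        _ = ∫ t in Set.Ioi (0:ℝ), ((L * P t) *ᵥ f) x := by
            refine MeasureTheory.integral_congr_ae (MeasureTheory.ae_of_all _ fun t => ?_)
            exact (heq t).symm
    rw [h1, h2, hFTC x]; ring
  · -- centering of V
    have hcent3 : ∀ t : ℝ, ∑ x, (P t *ᵥ f) x * ρ x = 0 := by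
      intro t
      have h0 := hcent t
      calc ∑ x, (P t *ᵥ f) x * ρ x = ∑ x, ρ x * (P t *ᵥ f) x :=
            Finset.sum_congr rfl fun x _ => by ring
        _ = 0 := h0
    calc ∑ x, V x * ρ x
        = ∑ x, ∫ t in Set.Ioi (0:ℝ), (P t *ᵥ f) x * ρ x := by
          refine Finset.sum_congr rfl fun x _ => ?_
          rw [hV' x, ← MeasureTheory.integral_mul_const]
      _ = ∫ t in Set.Ioi (0:ℝ), ∑ x, (P t *ᵥ f) x * ρ x :=
          (MeasureTheory.integral_finset_sum _ fun x _ => (hint x).mul_const _).symm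
      _ = 0 := by
          rw [MeasureTheory.integral_congr_ae (MeasureTheory.ae_of_all _ fun t => hcent3 t)]
          simp
end

section
/- Let H ⊊ K be a nonempty proper subset and let 𝔖_H be the unique function on K with (L𝔖_H)(x) + 1 = 0 for all x ∈ H and 𝔖_H(x) = 0 for all x ∉ H (the mean escape time from H). Then ∑_{x ∉ H} ∑_{y ∈ H} ρ^s(x) k(x,y) 𝔖_H(y) = ρ^s(H), where ρ^s(H) = ∑_{x ∈ H} ρ^s(x). -/
open scoped Classical

/-- Sum rule for mean escape times: if `𝔖_H` solves `L𝔖_H + 1 = 0` on `H` and vanishes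
outside `H`, then `∑_{x ∉ H} ∑_{y ∈ H} ρˢ(x) k(x,y) 𝔖_H(y) = ρˢ(H)`. -/
theorem escape_time_sum_rule
    {K : Type*} [Fintype K] [DecidableEq K]
    (k : K → K → ℝ) (hk : ∀ x y : K, x ≠ y → 0 ≤ k x y)
    (hirr : StronglyConnected k)
    (ρ : K → ℝ) (hρpos : ∀ x, 0 < ρ x) (hρsum : ∑ x, ρ x = 1)
    (hρstat : Matrix.vecMul ρ (gen k) = 0)
    (H : Finset K) (hH : H.Nonempty) (hHproper : H ≠ Finset.univ)
    (S : K → ℝ)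
    (hS : ∀ x ∈ H, (∑ y, k x y * (S y - S x)) + 1 = 0)
    (hS0 : ∀ x ∉ H, S x = 0) :
    ∑ x ∈ Hᶜ, ∑ y ∈ H, ρ x * k x y * S y = ∑ x ∈ H, ρ x := by
  classical
  -- Step 1: (LS)(x) = ∑_y gen_{x,y} S(y)
  have key : ∀ x, (∑ y, k x y * (S y - S x)) = ∑ y, gen k x y * S y := by
    intro x
    have h1 : ∑ y, gen k x y * S y
        = gen k x x * S x + ∑ y ∈ Finset.univ.erase x, gen k x y * S y :=
      (Finset.add_sum_erase _ _ (Finset.mem_univ x)).symm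
    have h2 : ∑ y, k x y * (S y - S x)
        = k x x * (S x - S x) + ∑ y ∈ Finset.univ.erase x, k x y * (S y - S x) :=
      (Finset.add_sum_erase _ _ (Finset.mem_univ x)).symm
    have h3 : ∀ y ∈ Finset.univ.erase x, gen k x y * S y = k x y * S y := by
      intro y hy
      have hxy : x ≠ y := (Finset.ne_of_mem_erase hy).symm
      simp [gen, hxy]
    have h4 : gen k x x = -∑ z ∈ Finset.univ.erase x, k x z := by simp [gen]
    rw [h1, h2, Finset.sum_congr rfl h3, h4]
    simp [mul_sub, Finset.sum_sub_distrib, ← Finset.sum_mul]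
    ring
  -- Step 2: stationarity gives ∑_x ρ x * (LS)(x) = 0
  have stat : ∑ x, ρ x * (∑ y, k x y * (S y - S x)) = 0 := by
    have h5 : ∑ x, ρ x * (∑ y, gen k x y * S y)
        = ∑ y, (∑ x, ρ x * gen k x y) * S y := by
      simp only [Finset.mul_sum, Finset.sum_mul, mul_assoc]
      exact Finset.sum_comm
    have h6 : ∀ y, ∑ x, ρ x * gen k x y = 0 := by
      intro y
      have := congrFun hρstat y
      simpa [Matrix.vecMul, dotProduct] using this
    simp only [key]
    rw [h5]
    simp [h6]
  -- Step 3: split the sum over H and Hᶜ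
  have hsplit : ∑ x ∈ H, ρ x * (∑ y, k x y * (S y - S x))
      + ∑ x ∈ Hᶜ, ρ x * (∑ y, k x y * (S y - S x)) = 0 := by
    rw [Finset.sum_add_sum_compl]; exact stat
  have hIn : ∑ x ∈ H, ρ x * (∑ y, k x y * (S y - S x)) = -∑ x ∈ H, ρ x := by
    rw [← Finset.sum_neg_distrib]
    refine Finset.sum_congr rfl fun x hx => ?_
    have := hS x hx
    have hfx : ∑ y, k x y * (S y - S x) = -1 := by linarith
    rw [hfx]; ring
  have hOut : ∑ x ∈ Hᶜ, ρ x * (∑ y, k x y * (S y - S x))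
      = ∑ x ∈ Hᶜ, ∑ y ∈ H, ρ x * k x y * S y := by
    refine Finset.sum_congr rfl fun x hx => ?_
    have hxH : x ∉ H := Finset.mem_compl.mp hx
    have hSx : S x = 0 := hS0 x hxH
    have : ∑ y, k x y * (S y - S x) = ∑ y ∈ H, k x y * S y := by
      simp only [hSx, sub_zero]
      exact (Finset.sum_subset (Finset.subset_univ H)
        (fun y _ hy => by rw [hS0 y hy, mul_zero])).symm
    rw [this, Finset.mul_sum]
    exact Finset.sum_congr rfl fun y _ => by ring
  rw [hIn, hOut] at hsplit
  linarith
end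

section
/- Let f : K → ℝ be centered, ⟨f⟩^s = 0. Then the function V(x) = −∑_z ρ^s(z) f(z) τ(x,z) + C, for any constant C, solves the Poisson equation LV(x) + f(x) = 0 for all x ∈ K; the constant C can be chosen so that ⟨V⟩^s = 0. -/
open scoped Classical

/-- For centered `f`, the function `V(x) = -∑_z ρˢ(z) f(z) τ(x,z) + C` solves the Poisson
equation `LV + f = 0` for every constant `C`, and `C` can be chosen so that `⟨V⟩ˢ = 0`. -/
theorem quasipotential_from_mfpt
    {K : Type*} [Fintype K] [DecidableEq K]
    (k : K → K → ℝ) (hk : ∀ x y : K, x ≠ y → 0 ≤ k x y)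
    (hirr : StronglyConnected k)
    (ρ : K → ℝ) (hρpos : ∀ x, 0 < ρ x) (hρsum : ∑ x, ρ x = 1)
    (hρstat : Matrix.vecMul ρ (gen k) = 0)
    (τ : K → K → ℝ) (hτ0 : ∀ z, τ z z = 0)
    (hτ : ∀ z x, x ≠ z → (∑ y, k x y * (τ y z - τ x z)) + 1 = 0)
    (f : K → ℝ) (hf : ∑ x, f x * ρ x = 0) :
    (∀ C : ℝ, ∀ x,
      (∑ y, k x y * ((-∑ z, ρ z * f z * τ y z + C) - (-∑ z, ρ z * f z * τ x z + C)))
        + f x = 0) ∧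
    (∃ C : ℝ, ∑ x, (-∑ z, ρ z * f z * τ x z + C) * ρ x = 0) := by
  -- stationarity in usable form: ∑_x ρ x * k x y = ρ y * ∑_w k y w
  have hstat : ∀ y, ∑ x, ρ x * k x y = ρ y * ∑ w, k y w := by
    intro y
    have h0 := congrFun hρstat y
    simp only [Matrix.vecMul, dotProduct, gen, Matrix.of_apply, Pi.zero_apply] at h0
    rw [← Finset.add_sum_erase Finset.univ _ (Finset.mem_univ y)] at h0
    simp only [if_pos rfl, if_true] at h0
    have h1 : ∑ x ∈ Finset.univ.erase y,
        ρ x * (if x = y then -∑ z ∈ Finset.univ.erase x, k x z else k x y)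
        = ∑ x ∈ Finset.univ.erase y, ρ x * k x y := by
      apply Finset.sum_congr rfl
      intro x hx
      rw [if_neg (Finset.ne_of_mem_erase hx)]
    rw [h1] at h0
    rw [← Finset.add_sum_erase Finset.univ (fun x => ρ x * k x y) (Finset.mem_univ y),
      ← Finset.add_sum_erase Finset.univ (fun w => k y w) (Finset.mem_univ y), mul_add]
    have h2 : ∑ x ∈ Finset.univ.erase y, ρ x * k x y
        = ρ y * ∑ z ∈ Finset.univ.erase y, k y z := by linarith
    rw [h2]
  set A : K → K → ℝ := fun x z => ∑ y, k x y * (τ y z - τ x z) with hA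
  have hAne : ∀ z x, x ≠ z → A x z = -1 := by
    intro z x hx
    have := hτ z x hx
    simp only [hA]
    linarith
  have hsum0 : ∀ z, ∑ x, ρ x * A x z = 0 := by
    intro z
    have h1 : ∑ x, ρ x * A x z
        = (∑ x, ∑ y, ρ x * k x y * τ y z) - ∑ x, ρ x * (∑ y, k x y) * τ x z := by
      rw [← Finset.sum_sub_distrib]
      apply Finset.sum_congr rfl
      intro x _
      simp only [hA, Finset.mul_sum, Finset.sum_mul, ← Finset.sum_sub_distrib]
      apply Finset.sum_congr rfl
      intro y _
      ring
    rw [h1, Finset.sum_comm]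
    have h2 : ∀ y, ∑ x, ρ x * k x y * τ y z = ρ y * (∑ w, k y w) * τ y z := by
      intro y
      rw [← Finset.sum_mul, hstat y]
    simp only [h2]
    ring
  have hAz : ∀ z, ρ z * A z z = 1 - ρ z := by
    intro z
    have h0 := hsum0 z
    rw [← Finset.add_sum_erase Finset.univ (fun x => ρ x * A x z) (Finset.mem_univ z)] at h0
    have h1 : ∑ x ∈ Finset.univ.erase z, ρ x * A x z = -(1 - ρ z) := by
      have he : ∑ x ∈ Finset.univ.erase z, ρ x * A x z
          = ∑ x ∈ Finset.univ.erase z, (-ρ x) := by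
        apply Finset.sum_congr rfl
        intro x hx
        rw [hAne z x (Finset.ne_of_mem_erase hx)]; ring
      rw [he, Finset.sum_neg_distrib, Finset.sum_erase_eq_sub (Finset.mem_univ z), hρsum]
    linarith
  have hρf : ∑ z, ρ z * f z = 0 := by
    rw [← hf]
    apply Finset.sum_congr rfl
    intro x _; ring
  set S : K → ℝ := fun w => ∑ z, ρ z * f z * τ w z with hS
  have hswap : ∀ x, ∑ z, ρ z * f z * A x z = ∑ y, k x y * (S y - S x) := by
    intro x
    simp only [hA, Finset.mul_sum]
    rw [Finset.sum_comm]
    apply Finset.sum_congr rfl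
    intro y _
    simp only [hS]
    rw [← Finset.sum_sub_distrib, Finset.mul_sum]
    apply Finset.sum_congr rfl
    intro z _; ring
  have hsplit : ∀ x, ∑ z, ρ z * f z * A x z = f x := by
    intro x
    rw [← Finset.add_sum_erase Finset.univ (fun z => ρ z * f z * A x z) (Finset.mem_univ x)]
    have h1 : ∑ z ∈ Finset.univ.erase x, ρ z * f z * A x z
        = ∑ z ∈ Finset.univ.erase x, (-(ρ z * f z)) := by
      apply Finset.sum_congr rfl
      intro z hz
      rw [hAne z x (Ne.symm (Finset.ne_of_mem_erase hz))]; ring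
    rw [h1, Finset.sum_neg_distrib, Finset.sum_erase_eq_sub (Finset.mem_univ x), hρf]
    have h2 : ρ x * f x * A x x = f x * (1 - ρ x) := by
      rw [← hAz x]; ring
    linarith
  constructor
  · intro C x
    have key : (∑ y, k x y * ((-S y + C) - (-S x + C))) = -∑ y, k x y * (S y - S x) := by
      have h : (∑ y, k x y * ((-S y + C) - (-S x + C))) = ∑ y, -(k x y * (S y - S x)) := by
        apply Finset.sum_congr rfl
        intro y _; ring
      rw [h, Finset.sum_neg_distrib]
    calc (∑ y, k x y * ((-∑ z, ρ z * f z * τ y z + C) - (-∑ z, ρ z * f z * τ x z + C))) + f x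
        = (∑ y, k x y * ((-S y + C) - (-S x + C))) + f x := rfl
      _ = -(∑ y, k x y * (S y - S x)) + f x := by rw [key]
      _ = -(∑ z, ρ z * f z * A x z) + f x := by rw [hswap x]
      _ = 0 := by rw [hsplit x]; ring
  · refine ⟨∑ x, (∑ z, ρ z * f z * τ x z) * ρ x, ?_⟩
    have h1 : ∑ x, (-∑ z, ρ z * f z * τ x z + ∑ x, (∑ z, ρ z * f z * τ x z) * ρ x) * ρ x
        = ∑ x, (-((∑ z, ρ z * f z * τ x z) * ρ x)
            + (∑ x, (∑ z, ρ z * f z * τ x z) * ρ x) * ρ x) := by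
      apply Finset.sum_congr rfl
      intro x _; ring
    rw [h1, Finset.sum_add_distrib, Finset.sum_neg_distrib, ← Finset.mul_sum, hρsum, mul_one]
    ring
end

section
/- Let f : K → ℝ be centered, ⟨f⟩^s = 0, and let V be any solution of LV + f = 0 on K. Then for all x, y ∈ K, V(x) − V(y) = ∑_z ρ^s(z) f(z) (τ(y,z) − τ(x,z)). -/
open scoped Classical

lemma gen_mulVec {K : Type*} [Fintype K] [DecidableEq K] (k : K → K → ℝ)
    (g : K → ℝ) (x : K) :
    (gen k).mulVec g x = ∑ y, k x y * (g y - g x) := by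
  classical
  simp only [Matrix.mulVec, dotProduct, gen, Matrix.of_apply]
  rw [← Finset.add_sum_erase Finset.univ _ (Finset.mem_univ x),
      ← Finset.add_sum_erase Finset.univ (fun y => k x y * (g y - g x)) (Finset.mem_univ x)]
  have h1 : ∑ y ∈ Finset.univ.erase x, (if x = y then -∑ z ∈ Finset.univ.erase x, k x z else k x y) * g y
      = ∑ y ∈ Finset.univ.erase x, k x y * g y := by
    refine Finset.sum_congr rfl fun y hy => ?_
    rw [if_neg (Ne.symm (Finset.ne_of_mem_erase hy))]
  rw [h1, if_pos rfl]
  have h2 : ∑ y ∈ Finset.univ.erase x, k x y * (g y - g x)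
      = ∑ y ∈ Finset.univ.erase x, k x y * g y - (∑ y ∈ Finset.univ.erase x, k x y) * g x := by
    rw [Finset.sum_mul, ← Finset.sum_sub_distrib]
    exact Finset.sum_congr rfl fun y _ => by ring
  rw [h2]; ring

lemma harmonic_const {K : Type*} [Fintype K] [DecidableEq K]
    (k : K → K → ℝ) (hk : ∀ x y : K, x ≠ y → 0 ≤ k x y)
    (hirr : StronglyConnected k) (h : K → ℝ)
    (hh : ∀ x, ∑ y, k x y * (h y - h x) = 0) :
    ∀ x y, h x = h y := by
  classical
  intro x y
  obtain ⟨x0, -, hmax⟩ := Finset.exists_max_image Finset.univ h ⟨x, Finset.mem_univ x⟩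
  have step : ∀ a, h a = h x0 → ∀ b, 0 < k a b → h b = h x0 := by
    intro a ha b hab
    have nonpos : ∀ y ∈ Finset.univ, k a y * (h y - h a) ≤ 0 := by
      intro y _
      by_cases hy : y = a
      · subst hy; simp
      · have hle : h y - h a ≤ 0 := by
          have := hmax y (Finset.mem_univ y); rw [ha]; linarith
        exact mul_nonpos_of_nonneg_of_nonpos (hk a y (Ne.symm hy)) hle
    have hz := (Finset.sum_eq_zero_iff_of_nonpos nonpos).mp (hh a) b (Finset.mem_univ b)
    have hzero : h b - h a = 0 := by
      rcases mul_eq_zero.mp hz with h' | h'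
      · exact absurd h' (ne_of_gt hab)
      · exact h'
    rw [← ha]; linarith
  have reach : ∀ w, h w = h x0 := by
    intro w
    induction hirr x0 w with
    | refl => rfl
    | tail hab hbc ih => exact step _ ih _ hbc
  rw [reach x, reach y]

/-- For centered `f` and any solution `V` of `LV + f = 0`,
`V(x) - V(y) = ∑_z ρˢ(z) f(z) (τ(y,z) - τ(x,z))`. -/
theorem quasipotential_difference_mfpt
    {K : Type*} [Fintype K] [DecidableEq K]
    (k : K → K → ℝ) (hk : ∀ x y : K, x ≠ y → 0 ≤ k x y)
    (hirr : StronglyConnected k)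
    (ρ : K → ℝ) (hρpos : ∀ x, 0 < ρ x) (hρsum : ∑ x, ρ x = 1)
    (hρstat : Matrix.vecMul ρ (gen k) = 0)
    (τ : K → K → ℝ) (hτ0 : ∀ z, τ z z = 0)
    (hτ : ∀ z x, x ≠ z → (∑ y, k x y * (τ y z - τ x z)) + 1 = 0)
    (f : K → ℝ) (hf : ∑ x, f x * ρ x = 0)
    (V : K → ℝ) (hV : ∀ x, (∑ y, k x y * (V y - V x)) + f x = 0) :
    ∀ x y, V x - V y = ∑ z, ρ z * f z * (τ y z - τ x z) := by
  classical
  -- stationarity in generator form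
  have stat : ∀ g : K → ℝ, ∑ x, ρ x * (∑ y, k x y * (g y - g x)) = 0 := by
    intro g
    have h := Matrix.dotProduct_mulVec ρ (gen k) g
    simp only [hρstat, zero_dotProduct] at h
    simpa [dotProduct, gen_mulVec] using h
  have hρf : ∑ z, ρ z * f z = 0 := by
    rw [← hf]; exact Finset.sum_congr rfl fun z _ => mul_comm _ _
  -- diagonal mean first passage value
  have cz : ∀ z, ρ z * (∑ y, k z y * (τ y z - τ z z)) = 1 - ρ z := by
    intro z
    have h0 := stat (fun w => τ w z)
    rw [← Finset.add_sum_erase Finset.univ _ (Finset.mem_univ z)] at h0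
    have h1 : ∑ x ∈ Finset.univ.erase z, ρ x * (∑ y, k x y * (τ y z - τ x z))
        = ∑ x ∈ Finset.univ.erase z, ρ x * (-1) := by
      refine Finset.sum_congr rfl fun x hx => ?_
      have h' := hτ z x (Finset.ne_of_mem_erase hx)
      have : (∑ y, k x y * (τ y z - τ x z)) = -1 := by linarith
      rw [this]
    have hsum : ∑ x ∈ Finset.univ.erase z, ρ x = 1 - ρ z := by
      have := Finset.add_sum_erase Finset.univ ρ (Finset.mem_univ z)
      rw [hρsum] at this; linarith
    have h2 : ∑ x ∈ Finset.univ.erase z, ρ x * (-1) = -(1 - ρ z) := by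
      simp [hsum]
    rw [h1, h2] at h0
    linarith
  -- key identity
  have key : ∀ x, ∑ z, ρ z * f z * (∑ y, k x y * (τ y z - τ x z)) = f x := by
    intro x
    rw [← Finset.add_sum_erase Finset.univ _ (Finset.mem_univ x)]
    have h1 : ρ x * f x * (∑ y, k x y * (τ y x - τ x x)) = f x * (1 - ρ x) := by
      rw [show ρ x * f x * (∑ y, k x y * (τ y x - τ x x))
          = f x * (ρ x * (∑ y, k x y * (τ y x - τ x x))) by ring, cz x]
    have h2 : ∑ z ∈ Finset.univ.erase x, ρ z * f z * (∑ y, k x y * (τ y z - τ x z))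
        = ∑ z ∈ Finset.univ.erase x, ρ z * f z * (-1) := by
      refine Finset.sum_congr rfl fun z hz => ?_
      have h' := hτ z x (Ne.symm (Finset.ne_of_mem_erase hz))
      have : (∑ y, k x y * (τ y z - τ x z)) = -1 := by linarith
      rw [this]
    have h3 : ∑ z ∈ Finset.univ.erase x, ρ z * f z = -(ρ x * f x) := by
      have h := Finset.add_sum_erase Finset.univ (fun z => ρ z * f z) (Finset.mem_univ x)
      beta_reduce at h
      rw [hρf] at h; linarith
    have h4 : ∑ z ∈ Finset.univ.erase x, ρ z * f z * (-1) = ρ x * f x := by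
      simp only [mul_neg_one]
      rw [Finset.sum_neg_distrib, h3]; ring
    rw [h1, h2, h4]; ring
  -- the explicit solution U
  set U : K → ℝ := fun x => ∑ z, ρ z * f z * (-τ x z) with hUdef
  have hU : ∀ x, ∑ y, k x y * (U y - U x) = - f x := by
    intro x
    have e1 : ∀ y, U y - U x = ∑ z, ρ z * f z * (τ x z - τ y z) := by
      intro y
      simp only [hUdef]
      rw [← Finset.sum_sub_distrib]
      exact Finset.sum_congr rfl fun z _ => by ring
    calc ∑ y, k x y * (U y - U x)
        = ∑ y, ∑ z, k x y * (ρ z * f z * (τ x z - τ y z)) := by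
          refine Finset.sum_congr rfl fun y _ => ?_
          rw [e1 y, Finset.mul_sum]
      _ = ∑ z, ∑ y, k x y * (ρ z * f z * (τ x z - τ y z)) := Finset.sum_comm
      _ = ∑ z, -(ρ z * f z * (∑ y, k x y * (τ y z - τ x z))) := by
          refine Finset.sum_congr rfl fun z _ => ?_
          rw [Finset.mul_sum, ← Finset.sum_neg_distrib]
          exact Finset.sum_congr rfl fun y _ => by ring
      _ = - f x := by rw [Finset.sum_neg_distrib, key x]
  -- V - U is harmonic
  have hharm : ∀ x, ∑ y, k x y * ((V y - U y) - (V x - U x)) = 0 := by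
    intro x
    have : ∑ y, k x y * ((V y - U y) - (V x - U x))
        = (∑ y, k x y * (V y - V x)) - ∑ y, k x y * (U y - U x) := by
      rw [← Finset.sum_sub_distrib]
      exact Finset.sum_congr rfl fun y _ => by ring
    rw [this, hU x]
    have := hV x
    linarith
  have hconst := harmonic_const k hk hirr (fun x => V x - U x) hharm
  intro x y
  have hc := hconst x y
  beta_reduce at hc
  have hxy : V x - V y = U x - U y := by linarith
  rw [hxy, hUdef]
  rw [← Finset.sum_sub_distrib]
  exact Finset.sum_congr rfl fun z _ => by ring
end

section
/- (Kirchhoff formula) The unique stationary distribution of the irreducible Markov jump process is given in terms of rooted spanning trees by ρ^s(x) = w(x)/W, where w(x) = ∑_{T rooted at x} ∏_{(u,u')∈T} k(u,u') and W = ∑_y w(y); that is, the vector x ↦ w(x)/W is a strictly positive probability vector satisfying ρ^s L = 0. -/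
open scoped Classical

/-- A spanning rooted forest of the digraph of `k`, encoded functionally: each non-fixed
vertex `z` carries the single outgoing arc `(z, F z)`, every vertex eventually reaches a
fixed point (the root of its tree, toward which all arcs of the tree are directed, so there
are no cycles), and every arc is an arc of the digraph. -/
def IsSpForest {K : Type*} (k : K → K → ℝ) (F : K → K) : Prop :=
  (∀ z, ∃ n : ℕ, F (F^[n] z) = F^[n] z) ∧ ∀ z, F z ≠ z → 0 < k z (F z)

/-- The weight of a forest: the product of the rates `k z (F z)` over its arcs. -/
noncomputable def forestWeight {K : Type*} [Fintype K] [DecidableEq K]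
    (k : K → K → ℝ) (F : K → K) : ℝ :=
  ∏ z ∈ Finset.univ.filter (fun z => F z ≠ z), k z (F z)

/-- A spanning tree rooted at `x`: a spanning forest whose only root is `x`. -/
def IsSpTree {K : Type*} [Fintype K] [DecidableEq K] (k : K → K → ℝ) (F : K → K) (x : K) :
    Prop :=
  IsSpForest k F ∧ Finset.univ.filter (fun z => F z = z) = {x}

/-- `w(x)`: the total weight of all spanning trees rooted at `x`. -/
noncomputable def treeWt {K : Type*} [Fintype K] [DecidableEq K] (k : K → K → ℝ) (x : K) : ℝ :=
  ∑ F ∈ Finset.univ.filter (fun F : K → K => IsSpTree k F x), forestWeight k F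

/-- `W = ∑_x w(x)`: the total weight of all rooted spanning trees. -/
noncomputable def treeWtTotal {K : Type*} [Fintype K] [DecidableEq K] (k : K → K → ℝ) : ℝ :=
  ∑ x, treeWt k x

set_option linter.unusedSectionVars false

set_option maxHeartbeats 800000

namespace KirchhoffAux

variable {K : Type*} [Fintype K] [DecidableEq K]

def IsStree (F : K → K) (x : K) : Prop :=
  (∀ z, ∃ n : ℕ, F (F^[n] z) = F^[n] z) ∧ Finset.univ.filter (fun z => F z = z) = {x}

lemma IsStree.fix_iff {F : K → K} {x : K} (h : IsStree F x) (z : K) : F z = z ↔ z = x := by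
  have := Finset.ext_iff.mp h.2 z
  simpa using this

lemma IsStree.root {F : K → K} {x : K} (h : IsStree F x) : F x = x := (h.fix_iff x).mpr rfl

/-- Total weight: product over all vertices. -/
noncomputable def fullWt (k : K → K → ℝ) (G : K → K) : ℝ := ∏ z, k z (G z)

lemma forestWeight_stree (k : K → K → ℝ) {T : K → K} {x : K} (hT : IsStree T x) :
    forestWeight k T = ∏ z ∈ Finset.univ.erase x, k z (T z) := by
  unfold forestWeight
  congr 1
  ext z
  simp [Finset.mem_erase, hT.fix_iff z]

lemma fullWt_update (k : K → K → ℝ) {T : K → K} {x : K} (hT : IsStree T x) (y : K) :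
    fullWt k (Function.update T x y) = forestWeight k T * k x y := by
  unfold fullWt
  rw [← Finset.prod_erase_mul _ _ (Finset.mem_univ x), Function.update_self,
    forestWeight_stree k hT]
  congr 1
  refine Finset.prod_congr rfl fun z hz => ?_
  rw [Function.update_of_ne (Finset.ne_of_mem_erase hz)]

/-- Spanning functional digraphs with their unique cycle through `y`. -/
noncomputable def Sset (y : K) : Finset (K → K) :=
  Finset.univ.filter fun G => (∀ z, ∃ n, G^[n] z = y) ∧ G y ≠ y

/-- The cycle-predecessor of `y` in `G`. -/
noncomputable def predRoot (G : K → K) (y : K) : K :=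
  if h : ∃ n, G^[n] (G y) = y then G^[Nat.find h] y else y

lemma predRoot_spec {G : K → K} {y : K} (hG : ∀ z, ∃ n, G^[n] z = y) (hGy : G y ≠ y) :
    G (predRoot G y) = y ∧ predRoot G y ≠ y ∧ ∃ j, G^[j] y = predRoot G y := by
  have h : ∃ n, G^[n] (G y) = y := hG (G y)
  rw [predRoot, dif_pos h]
  have hs := Nat.find_spec h
  have h1 : G (G^[Nat.find h] y) = y := by
    have := (Function.iterate_succ_apply' G (Nat.find h) y).symm.trans
      (Function.iterate_succ_apply G (Nat.find h) y)
    rw [this]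
    exact hs
  refine ⟨h1, ?_, Nat.find h, rfl⟩
  intro he
  rw [he] at h1
  exact hGy h1

lemma IsStree.reach {F : K → K} {x : K} (h : IsStree F x) (z : K) : ∃ n, F^[n] z = x := by
  obtain ⟨n, hn⟩ := h.1 z
  exact ⟨n, (h.fix_iff _).mp hn⟩

lemma iterate_update_eq {f : K → K} {p q w : K} {n : ℕ}
    (h : ∀ m, m < n → f^[m] w ≠ p) :
    ∀ m, m ≤ n → (Function.update f p q)^[m] w = f^[m] w := by
  intro m hm
  induction m with
  | zero => rfl
  | succ m ih =>
    rw [Function.iterate_succ_apply', Function.iterate_succ_apply',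
      ih (le_of_lt (Nat.lt_of_succ_le hm))]
    exact Function.update_of_ne (h m (Nat.lt_of_succ_le hm)) _ _

lemma exists_iterate_update (f : K → K) (p q w : K) (hw : ∃ n, f^[n] w = p) :
    ∃ n, (Function.update f p q)^[n] w = p := by
  refine ⟨Nat.find hw, ?_⟩
  rw [iterate_update_eq (fun m hm => Nat.find_min hw hm) _ le_rfl]
  exact Nat.find_spec hw

lemma noFix {G : K → K} {y : K} (hG : ∀ z, ∃ n, G^[n] z = y) (hGy : G y ≠ y)
    {z : K} : G z ≠ z := by
  intro hz
  obtain ⟨n, hn⟩ := hG z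
  rw [Function.iterate_fixed hz] at hn
  subst hn
  exact hGy hz

lemma update_isStree {G : K → K} {y : K} (hG : ∀ z, ∃ n, G^[n] z = y) (hGy : G y ≠ y)
    {x : K} (hx : ∃ j, G^[j] y = x) : IsStree (Function.update G x x) x := by
  constructor
  · intro w
    have hr : ∃ n, G^[n] w = x := by
      obtain ⟨n0, h0⟩ := hG w
      obtain ⟨j, hj⟩ := hx
      exact ⟨j + n0, by rw [Function.iterate_add_apply, h0, hj]⟩
    obtain ⟨n, hn⟩ := exists_iterate_update G x x w hr
    exact ⟨n, by rw [hn, Function.update_self]⟩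
  · ext z
    simp only [Finset.mem_filter, Finset.mem_univ, true_and, Finset.mem_singleton]
    constructor
    · intro hz
      by_contra hzx
      rw [Function.update_of_ne hzx] at hz
      exact noFix hG hGy hz
    · rintro rfl
      exact Function.update_self ..

lemma mem_Sset_update_root {T : K → K} {x y : K} (hT : IsStree T x) (hxy : x ≠ y) :
    Function.update T x y ∈ Sset y := by
  simp only [Sset, Finset.mem_filter, Finset.mem_univ, true_and]
  constructor
  · intro z
    obtain ⟨n, hn⟩ := exists_iterate_update T x y z (hT.reach z)
    exact ⟨n + 1, by rw [Function.iterate_succ_apply', hn, Function.update_self]⟩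
  · rw [Function.update_of_ne (Ne.symm hxy)]
    intro h
    exact hxy ((hT.fix_iff y).mp h).symm

lemma mem_Sset_update_out {T : K → K} {y z : K} (hT : IsStree T y) (hzy : z ≠ y) :
    Function.update T y z ∈ Sset y := by
  simp only [Sset, Finset.mem_filter, Finset.mem_univ, true_and]
  refine ⟨fun w => exists_iterate_update T y z w (hT.reach w), ?_⟩
  rw [Function.update_self]
  exact hzy

/-- The key recovery lemma: the cycle-predecessor of `y` in `update T x y` is `x`. -/
lemma predRoot_update {T : K → K} {x y : K} (hT : IsStree T x) (hxy : x ≠ y) :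
    predRoot (Function.update T x y) y = x := by
  set G := Function.update T x y with hGdef
  have hreach : ∃ n, T^[n] y = x := hT.reach y
  set n' := Nat.find hreach with hn'
  have hagree : ∀ m, m ≤ n' → G^[m] y = T^[m] y :=
    iterate_update_eq (fun m hm => Nat.find_min hreach hm)
  have hGn : G^[n'] y = x := (hagree n' le_rfl).trans (Nat.find_spec hreach)
  have hPn : G^[n'] (G y) = y := by
    rw [← Function.iterate_succ_apply, Function.iterate_succ_apply', hGn]
    simp [hGdef]
  have hP : ∃ n, G^[n] (G y) = y := ⟨n', hPn⟩
  rw [predRoot, dif_pos hP]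
  set m' := Nat.find hP with hm'
  have hle : m' ≤ n' := Nat.find_le hPn
  rcases lt_or_eq_of_le hle with hlt | heq
  · exfalso
    have h1 : G^[m' + 1] y = y := by
      rw [Function.iterate_succ_apply]
      exact Nat.find_spec hP
    have h2 : T^[m' + 1] y = y := by
      rw [← hagree (m' + 1) (Nat.succ_le_of_lt hlt)]
      exact h1
    -- y is T-periodic with period m'+1 ≥ 1, but also reaches the fixed point x ≠ y
    set j := m' + 1 with hj
    have hper : ∀ t, T^[j * t] y = y := by
      intro t
      rw [Function.iterate_mul]
      exact Function.iterate_fixed h2 t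
    have hbig : j * (n' + 1) = (j * (n' + 1) - n') + n' := by
      have : n' ≤ j * (n' + 1) := by nlinarith [Nat.one_le_iff_ne_zero.mpr (by omega : j ≠ 0)]
      omega
    have : T^[j * (n' + 1)] y = x := by
      rw [hbig, Function.iterate_add_apply, Nat.find_spec hreach]
      exact Function.iterate_fixed hT.root _
    rw [hper (n' + 1)] at this
    exact hxy this.symm
  · rw [heq]
    exact hGn

noncomputable def treeWt' {K : Type*} [Fintype K] [DecidableEq K]
    (k : K → K → ℝ) (x : K) : ℝ :=
  ∑ T ∈ Finset.univ.filter (fun T : K → K => IsStree T x), forestWeight k T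

lemma sum_lhs (k : K → K → ℝ) (y : K) :
    ∑ x ∈ Finset.univ.erase y, treeWt' k x * k x y = ∑ G ∈ Sset y, fullWt k G := by
  have h1 : ∀ x ∈ Finset.univ.erase y, treeWt' k x * k x y
      = ∑ T ∈ Finset.univ.filter (fun T : K → K => IsStree T x), forestWeight k T * k x y := by
    intro x _
    rw [treeWt', Finset.sum_mul]
  rw [Finset.sum_congr rfl h1, Finset.sum_sigma']
  refine Finset.sum_nbij' (i := fun p => Function.update p.2 p.1 y)
    (j := fun G => ⟨predRoot G y, Function.update G (predRoot G y) (predRoot G y)⟩)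
    ?_ ?_ ?_ ?_ ?_
  · rintro ⟨x, T⟩ hp
    rw [Finset.mem_sigma] at hp
    obtain ⟨hx, hT⟩ := hp
    simp only [Finset.mem_filter, Finset.mem_univ, true_and] at hT
    exact mem_Sset_update_root hT (Finset.ne_of_mem_erase hx)
  · intro G hG
    simp only [Sset, Finset.mem_filter, Finset.mem_univ, true_and] at hG
    obtain ⟨hG1, hG2⟩ := hG
    obtain ⟨hx1, hx2, hx3⟩ := predRoot_spec hG1 hG2
    rw [Finset.mem_sigma]
    refine ⟨Finset.mem_erase.mpr ⟨hx2, Finset.mem_univ _⟩, ?_⟩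
    simp only [Finset.mem_filter, Finset.mem_univ, true_and]
    exact update_isStree hG1 hG2 hx3
  · rintro ⟨x, T⟩ hp
    rw [Finset.mem_sigma] at hp
    obtain ⟨hx, hT⟩ := hp
    simp only [Finset.mem_filter, Finset.mem_univ, true_and] at hT
    have hxy : x ≠ y := Finset.ne_of_mem_erase hx
    have h2 : predRoot (Function.update T x y) y = x := predRoot_update hT hxy
    have h3 : Function.update (Function.update T x y) x x = T := by
      rw [Function.update_idem]
      nth_rewrite 2 [← hT.root]
      exact Function.update_eq_self x T
    simp only [h2, h3]
  · intro G hG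
    simp only [Sset, Finset.mem_filter, Finset.mem_univ, true_and] at hG
    obtain ⟨hG1, hG2⟩ := hG
    obtain ⟨hx1, hx2, hx3⟩ := predRoot_spec hG1 hG2
    simp only
    rw [Function.update_idem]
    have h4 := Function.update_eq_self (predRoot G y) G
    rwa [hx1] at h4
  · rintro ⟨x, T⟩ hp
    rw [Finset.mem_sigma] at hp
    obtain ⟨hx, hT⟩ := hp
    simp only [Finset.mem_filter, Finset.mem_univ, true_and] at hT
    exact (fullWt_update k hT y).symm

lemma sum_rhs (k : K → K → ℝ) (y : K) :
    treeWt' k y * (∑ z ∈ Finset.univ.erase y, k y z) = ∑ G ∈ Sset y, fullWt k G := by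
  have h1 : treeWt' k y * (∑ z ∈ Finset.univ.erase y, k y z)
      = ∑ p ∈ (Finset.univ.filter fun T : K → K => IsStree T y) ×ˢ Finset.univ.erase y,
          forestWeight k p.1 * k y p.2 := by
    rw [Finset.sum_product, treeWt', Finset.sum_mul]
    exact Finset.sum_congr rfl fun T _ => by rw [Finset.mul_sum]
  rw [h1]
  refine Finset.sum_nbij' (i := fun p => Function.update p.1 y p.2)
    (j := fun G => (Function.update G y y, G y)) ?_ ?_ ?_ ?_ ?_
  · rintro ⟨T, z⟩ hp
    rw [Finset.mem_product] at hp
    obtain ⟨hT, hz⟩ := hp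
    simp only [Finset.mem_filter, Finset.mem_univ, true_and] at hT
    exact mem_Sset_update_out hT (Finset.ne_of_mem_erase hz)
  · intro G hG
    simp only [Sset, Finset.mem_filter, Finset.mem_univ, true_and] at hG
    obtain ⟨hG1, hG2⟩ := hG
    rw [Finset.mem_product]
    refine ⟨?_, Finset.mem_erase.mpr ⟨hG2, Finset.mem_univ _⟩⟩
    simp only [Finset.mem_filter, Finset.mem_univ, true_and]
    exact update_isStree hG1 hG2 ⟨0, rfl⟩
  · rintro ⟨T, z⟩ hp
    rw [Finset.mem_product] at hp
    obtain ⟨hT, hz⟩ := hp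
    simp only [Finset.mem_filter, Finset.mem_univ, true_and] at hT
    have h3 : Function.update (Function.update T y z) y y = T := by
      rw [Function.update_idem]
      nth_rewrite 2 [← hT.root]
      exact Function.update_eq_self y T
    rw [Prod.mk.injEq]
    exact ⟨h3, Function.update_self ..⟩
  · intro G hG
    simp only
    rw [Function.update_idem]
    exact Function.update_eq_self _ G
  · rintro ⟨T, z⟩ hp
    rw [Finset.mem_product] at hp
    obtain ⟨hT, hz⟩ := hp
    simp only [Finset.mem_filter, Finset.mem_univ, true_and] at hT
    exact (fullWt_update k hT z).symm


/-- `z` is connected to `x` by a positive-rate path of length `n`. -/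
def chain (k : K → K → ℝ) (x : K) : ℕ → K → Prop
  | 0, z => z = x
  | (n+1), z => ∃ w, 0 < k z w ∧ chain k x n w

lemma chain_of_rtg {k : K → K → ℝ} {x z : K}
    (h : Relation.ReflTransGen (fun a b => 0 < k a b) z x) : ∃ n, chain k x n z := by
  induction h using Relation.ReflTransGen.head_induction_on with
  | refl => exact ⟨0, rfl⟩
  | head hab _ ih =>
    obtain ⟨n, hn⟩ := ih
    exact ⟨n + 1, _, hab, hn⟩

lemma exists_spTree (k : K → K → ℝ) (hirr : StronglyConnected k) (x : K) :
    ∃ F, IsSpTree k F x := by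
  have hch : ∀ z, ∃ n, chain k x n z := fun z => chain_of_rtg (hirr z x)
  set d : K → ℕ := fun z => Nat.find (hch z) with hd
  have hstep : ∀ z, z ≠ x → ∃ w, 0 < k z w ∧ d w < d z := by
    intro z hz
    have h1 : chain k x (d z) z := Nat.find_spec (hch z)
    have h2 : d z ≠ 0 := by
      intro h0
      have hs := Nat.find_spec (hch z)
      rw [show Nat.find (hch z) = 0 from h0] at hs
      exact hz hs
    obtain ⟨m, hm⟩ := Nat.exists_eq_succ_of_ne_zero h2
    rw [hm] at h1
    obtain ⟨w, hw, hcw⟩ := h1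
    refine ⟨w, hw, ?_⟩
    calc d w ≤ m := Nat.find_le hcw
    _ < d z := by omega
  choose! wfun hw1 hw2 using hstep
  set F : K → K := fun z => if z = x then x else wfun z with hF
  have hFx : F x = x := by simp [hF]
  have hFz : ∀ z, z ≠ x → F z = wfun z := fun z hz => by simp [hF, hz]
  have hne : ∀ z, z ≠ x → F z ≠ z := by
    intro z hz
    rw [hFz z hz]
    intro h
    have := hw2 z hz
    rw [h] at this
    omega
  have reach : ∀ N z, d z ≤ N → ∃ n, F (F^[n] z) = F^[n] z := by
    intro N
    induction N with
    | zero =>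
      intro z hz
      have : z = x := by
        have h0 : d z = 0 := Nat.le_zero.mp hz
        have := Nat.find_spec (hch z)
        rw [show Nat.find (hch z) = 0 from h0] at this
        exact this
      subst this
      exact ⟨0, hFx⟩
    | succ N ih =>
      intro z hz
      by_cases hx : z = x
      · subst hx; exact ⟨0, hFx⟩
      · obtain ⟨n, hn⟩ := ih (wfun z) (by have := hw2 z hx; omega)
        refine ⟨n + 1, ?_⟩
        rw [Function.iterate_succ_apply, hFz z hx]
        exact hn
  refine ⟨F, ⟨⟨fun z => reach (d z) z le_rfl, ?_⟩, ?_⟩⟩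
  · intro z hz
    have hzx : z ≠ x := by
      intro h; subst h; exact hz hFx
    rw [hFz z hzx]
    exact hw1 z hzx
  · ext z
    simp only [Finset.mem_filter, Finset.mem_univ, true_and, Finset.mem_singleton]
    constructor
    · intro h
      by_contra hzx
      exact hne z hzx h
    · rintro rfl; exact hFx

lemma treeWt_pos (k : K → K → ℝ) (hirr : StronglyConnected k) (x : K) :
    0 < treeWt k x := by
  rw [treeWt]
  apply Finset.sum_pos
  · intro F hF
    simp only [Finset.mem_filter, Finset.mem_univ, true_and] at hF
    unfold forestWeight
    apply Finset.prod_pos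
    intro z hz
    simp only [Finset.mem_filter, Finset.mem_univ, true_and] at hz
    exact hF.1.2 z hz
  · obtain ⟨F, hF⟩ := exists_spTree k hirr x
    exact ⟨F, by simp only [Finset.mem_filter, Finset.mem_univ, true_and]; exact hF⟩

lemma treeWt_eq (k : K → K → ℝ) (hk : ∀ x y : K, x ≠ y → 0 ≤ k x y) (x : K) :
    treeWt k x = treeWt' k x := by
  rw [treeWt, treeWt']
  apply Finset.sum_subset
  · intro T hT
    simp only [Finset.mem_filter, Finset.mem_univ, true_and] at *
    exact ⟨hT.1.1, hT.2⟩
  · intro T hT hT2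
    simp only [Finset.mem_filter, Finset.mem_univ, true_and] at hT hT2
    have hzz : ∃ z, T z ≠ z ∧ ¬ 0 < k z (T z) := by
      by_contra hc
      push_neg at hc
      exact hT2 ⟨⟨hT.1, fun z hz => hc z hz⟩, hT.2⟩
    obtain ⟨z, hz, hzk⟩ := hzz
    have hz0 : k z (T z) = 0 :=
      le_antisymm (not_lt.mp hzk) (hk z (T z) (fun h => hz h.symm))
    unfold forestWeight
    exact Finset.prod_eq_zero (Finset.mem_filter.mpr ⟨Finset.mem_univ z, hz⟩) hz0

end KirchhoffAux

/-- Kirchhoff's formula: `x ↦ w(x)/W` is the unique stationary distribution, i.e. it is a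
strictly positive probability vector with `ρˢ L = 0`. -/

theorem kirchhoff_formula
    {K : Type*} [Fintype K] [DecidableEq K] [Nonempty K]
    (k : K → K → ℝ) (hk : ∀ x y : K, x ≠ y → 0 ≤ k x y)
    (hirr : StronglyConnected k) :
    (∀ x, 0 < treeWt k x / treeWtTotal k) ∧
    (∑ x, treeWt k x / treeWtTotal k = 1) ∧
    Matrix.vecMul (fun x => treeWt k x / treeWtTotal k) (gen k) = 0 := by
  have hWpos : 0 < treeWtTotal k := by
    rw [treeWtTotal]
    exact Finset.sum_pos (fun x _ => KirchhoffAux.treeWt_pos k hirr x) Finset.univ_nonempty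
  refine ⟨fun x => div_pos (KirchhoffAux.treeWt_pos k hirr x) hWpos, ?_, ?_⟩
  · rw [← Finset.sum_div, show ∑ x, treeWt k x = treeWtTotal k from rfl]
    exact div_self hWpos.ne'
  · have key : ∀ y, ∑ x, treeWt k x * gen k x y = 0 := by
      intro y
      have hgen_ne : ∀ x ∈ Finset.univ.erase y, gen k x y = k x y := by
        intro x hx
        simp [gen, Finset.ne_of_mem_erase hx]
      have hgen_diag : gen k y y = -∑ z ∈ Finset.univ.erase y, k y z := by
        simp [gen]
      rw [← Finset.sum_erase_add _ _ (Finset.mem_univ y)]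
      have h1 : ∑ x ∈ Finset.univ.erase y, treeWt k x * gen k x y
          = ∑ G ∈ KirchhoffAux.Sset y, KirchhoffAux.fullWt k G := by
        rw [← KirchhoffAux.sum_lhs k y]
        exact Finset.sum_congr rfl fun x hx => by
          rw [hgen_ne x hx, KirchhoffAux.treeWt_eq k hk x]
      have h2 : treeWt k y * gen k y y
          = -∑ G ∈ KirchhoffAux.Sset y, KirchhoffAux.fullWt k G := by
        rw [hgen_diag, mul_neg, ← KirchhoffAux.sum_rhs k y, KirchhoffAux.treeWt_eq k hk y]
      rw [h1, h2]
      ring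
    funext y
    show ∑ x, (treeWt k x / treeWtTotal k) * gen k x y = 0
    have hsum : ∑ x, treeWt k x / treeWtTotal k * gen k x y
        = (∑ x, treeWt k x * gen k x y) / treeWtTotal k := by
      rw [Finset.sum_div]
      exact Finset.sum_congr rfl fun x _ => by ring
    rw [hsum, key y, zero_div]
end

section
/- (Graphical representation of mean first-passage times) For all x ≠ z in K, the mean first-passage time satisfies τ(x,z) = w(x,z)/w(z), where w(x,z) is the total weight of all rooted spanning two-tree forests in which x and z lie in different trees and the tree containing z is rooted at z (the other tree rooted at any of its vertices), and w(z) is the total weight of all spanning trees rooted at z. Equivalently, the function x ↦ w(x,z)/w(z) (with value 0 at x = z) satisfies ∑_y k(x,y)[τ(y,z) − τ(x,z)] + 1 = 0 for all x ≠ z. -/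
open scoped Classical

set_option linter.unusedSectionVars false

/-- A rooted spanning two-tree forest: a spanning forest with exactly two roots. -/
def IsTwoForest {K : Type*} [Fintype K] [DecidableEq K] (k : K → K → ℝ) (F : K → K) : Prop :=
  IsSpForest k F ∧ (Finset.univ.filter (fun z => F z = z)).card = 2

/-- `w(x → y)`: the total weight of all rooted spanning two-tree forests in which `x` and `y`
lie in the same tree, that tree being rooted at `y`. -/
noncomputable def wTo {K : Type*} [Fintype K] [DecidableEq K] (k : K → K → ℝ) (x y : K) : ℝ :=
  ∑ F ∈ Finset.univ.filter
      (fun F : K → K => IsTwoForest k F ∧ F y = y ∧ ∃ n : ℕ, F^[n] x = y),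
    forestWeight k F

/-- `w(x, z)`: the total weight of all rooted spanning two-tree forests in which `x` and `z`
lie in different trees and the tree containing `z` is rooted at `z`. -/
noncomputable def wSep {K : Type*} [Fintype K] [DecidableEq K] (k : K → K → ℝ) (x z : K) : ℝ :=
  ∑ F ∈ Finset.univ.filter
      (fun F : K → K => IsTwoForest k F ∧ F z = z ∧ ¬∃ n : ℕ, F^[n] x = z),
    forestWeight k F

/-- `W₂`: the total weight of all rooted spanning two-tree forests. -/
noncomputable def wTwoTotal {K : Type*} [Fintype K] [DecidableEq K] (k : K → K → ℝ) : ℝ :=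
  ∑ F ∈ Finset.univ.filter (fun F : K → K => IsTwoForest k F), forestWeight k F

/-! ### Auxiliary lemmas -/

section Helpers

variable {K : Type*}

/-- reachability along a functional graph -/
def mreach (F : K → K) (a b : K) : Prop := ∃ n : ℕ, F^[n] a = b

lemma mreach_trans {F : K → K} {a b c : K} (h1 : mreach F a b) (h2 : mreach F b c) :
    mreach F a c := by
  obtain ⟨m, hm⟩ := h1; obtain ⟨n, hn⟩ := h2
  exact ⟨n + m, by rw [Function.iterate_add_apply, hm, hn]⟩

lemma iterate_fixed_of_fixed {F : K → K} {c : K} (hc : F c = c) (n : ℕ) : F^[n] c = c := by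
  induction n with
  | zero => rfl
  | succ n ih => rw [Function.iterate_succ_apply', ih, hc]

lemma mreach_fixed_eq {F : K → K} {a b : K} (ha : F a = a) (h : mreach F a b) : b = a := by
  obtain ⟨n, hn⟩ := h; rw [← hn, iterate_fixed_of_fixed ha]

lemma mreach_tail {F : K → K} {a b : K} (h : mreach F a b) (hab : a ≠ b) :
    mreach F (F a) b := by
  obtain ⟨n, hn⟩ := h
  cases n with
  | zero => exact absurd hn hab
  | succ m => exact ⟨m, by rw [← Function.iterate_succ_apply]; exact hn⟩

/-- once the orbit hits a fixed value it stays there -/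
lemma iterate_stable {F : K → K} {a : K} {n : ℕ} (h : F (F^[n] a) = F^[n] a) {m : ℕ}
    (hm : n ≤ m) : F^[m] a = F^[n] a := by
  obtain ⟨t, rfl⟩ := Nat.exists_eq_add_of_le hm
  rw [Nat.add_comm, Function.iterate_add_apply]
  exact iterate_fixed_of_fixed h t

/-- two fixed points reached from the same start coincide -/
lemma fixed_reach_unique {F : K → K} {a b c : K} (hb : F b = b) (hc : F c = c)
    (h1 : mreach F a b) (h2 : mreach F a c) : b = c := by
  obtain ⟨m, hm⟩ := h1; obtain ⟨n, hn⟩ := h2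
  rcases le_total m n with h | h
  · have hfix : F (F^[m] a) = F^[m] a := by rw [hm, hb]
    rw [← hm, ← iterate_stable hfix h, hn]
  · have hfix : F (F^[n] a) = F^[n] a := by rw [hn, hc]
    rw [← hn, ← iterate_stable hfix h, hm]

/-- in a forest (every orbit eventually fixed) there are no nontrivial cycles -/
lemma mreach_antisymm {F : K → K} {a b : K} (hF : ∃ n : ℕ, F (F^[n] a) = F^[n] a)
    (h1 : mreach F a b) (h2 : mreach F b a) : a = b := by
  obtain ⟨m, hm⟩ := h1
  obtain ⟨n, hn⟩ := h2
  obtain ⟨N, hN⟩ := hF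
  have hper : F^[n + m] a = a := by rw [Function.iterate_add_apply, hm, hn]
  rcases Nat.eq_zero_or_pos (n + m) with h0 | hpos
  · obtain ⟨hn0, hm0⟩ := Nat.add_eq_zero.mp h0
    subst hm0; simpa using hm
  · have hperiodic : ∀ t : ℕ, F^[(n + m) * t] a = a := by
      intro t; induction t with
      | zero => rfl
      | succ t ih => rw [Nat.mul_succ, Function.iterate_add_apply, hper, ih]
    have hbig : N ≤ (n + m) * N + (n + m) * 1 := by nlinarith
    have h1' : F^[(n+m) * N + (n+m) * 1] a = F^[N] a := iterate_stable hN hbig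
    have h2' : F^[(n+m) * N + (n+m) * 1] a = a := by
      rw [← Nat.mul_add]; exact hperiodic _
    have hafix : F a = a := by
      have heq : a = F^[N] a := h2'.symm.trans h1'
      rw [heq]; exact hN
    rw [← hm, iterate_fixed_of_fixed hafix]

lemma iterate_update_of_ne {F : K → K} {x y a : K} [DecidableEq K]
    (h : ∀ i : ℕ, F^[i] a ≠ x) (n : ℕ) :
    (Function.update F x y)^[n] a = F^[n] a := by
  induction n with
  | zero => rfl
  | succ n ih =>
    rw [Function.iterate_succ_apply', Function.iterate_succ_apply', ih,
      Function.update_of_ne (h n)]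

lemma not_mreach_iff {F : K → K} {a x : K} : ¬ mreach F a x ↔ ∀ i : ℕ, F^[i] a ≠ x := by
  simp [mreach]

lemma mreach_update_of_not_mreach {F : K → K} {x y a b : K} [DecidableEq K]
    (h : ¬ mreach F a x) : mreach (Function.update F x y) a b ↔ mreach F a b := by
  have h' := not_mreach_iff.mp h
  constructor <;> rintro ⟨n, hn⟩ <;> exact ⟨n, by rw [← hn, iterate_update_of_ne h']⟩

/-- if `a` reaches `x`, it still reaches `x` after updating the arc out of `x` -/
lemma mreach_update_self {F : K → K} {x y a : K} [DecidableEq K]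
    (h : mreach F a x) : mreach (Function.update F x y) a x := by
  obtain ⟨n, hn⟩ := h
  have hex : ∃ n : ℕ, F^[n] a = x := ⟨n, hn⟩
  have hspec : F^[Nat.find hex] a = x := Nat.find_spec hex
  have hmin : ∀ i < Nat.find hex, F^[i] a ≠ x := fun i hi => Nat.find_min hex hi
  have key : ∀ i ≤ Nat.find hex, (Function.update F x y)^[i] a = F^[i] a := by
    intro i hi
    induction i with
    | zero => rfl
    | succ i ih =>
      rw [Function.iterate_succ_apply', Function.iterate_succ_apply',
        ih (Nat.le_of_succ_le hi), Function.update_of_ne (hmin i hi)]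
  exact ⟨Nat.find hex, by rw [key _ le_rfl, hspec]⟩

end Helpers

section Forest
variable {K : Type*} [Fintype K] [DecidableEq K] {k : K → K → ℝ} {F : K → K} {x y : K}

lemma exists_root (hF : IsSpForest k F) (a : K) : ∃ c, F c = c ∧ mreach F a c := by
  obtain ⟨n, hn⟩ := hF.1 a
  exact ⟨F^[n] a, hn, ⟨n, rfl⟩⟩

lemma forest_update (hF : IsSpForest k F) (hyx : y ≠ x) (hpos : 0 < k x y)
    (hnr : ¬ mreach F y x) : IsSpForest k (Function.update F x y) := by
  set G := Function.update F x y with hG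
  have hGx : G x = y := Function.update_self x y F
  have hGne : ∀ v, v ≠ x → G v = F v := fun v hv => Function.update_of_ne hv y F
  constructor
  · intro a
    have main : ∃ c, G c = c ∧ mreach G a c := by
      by_cases hax : mreach F a x
      · obtain ⟨c, hc, hyc⟩ := exists_root hF y
        have hcx : c ≠ x := fun h => hnr (h ▸ hyc)
        refine ⟨c, by rw [hGne c hcx]; exact hc, ?_⟩
        have hxy : mreach G x y := ⟨1, by simpa using hGx⟩
        exact mreach_trans (mreach_update_self hax)
          (mreach_trans hxy ((mreach_update_of_not_mreach hnr).mpr hyc))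
      · obtain ⟨c, hc, hac⟩ := exists_root hF a
        have hcx : c ≠ x := by rintro rfl; exact hax hac
        exact ⟨c, by rw [hGne c hcx]; exact hc,
          (mreach_update_of_not_mreach hax).mpr hac⟩
    obtain ⟨c, hc, n, hn⟩ := main
    exact ⟨n, by rw [hn, hc]⟩
  · intro v hv
    by_cases hvx : v = x
    · subst hvx; rw [hGx]; exact hpos
    · rw [hGne v hvx]
      exact hF.2 v (by rwa [hGne v hvx] at hv)

lemma forest_update_self (hF : IsSpForest k F) : IsSpForest k (Function.update F x x) := by
  set G := Function.update F x x with hG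
  have hGx : G x = x := Function.update_self x x F
  have hGne : ∀ v, v ≠ x → G v = F v := fun v hv => Function.update_of_ne hv x F
  constructor
  · intro a
    have main : ∃ c, G c = c ∧ mreach G a c := by
      by_cases hax : mreach F a x
      · exact ⟨x, hGx, mreach_update_self hax⟩
      · obtain ⟨c, hc, hac⟩ := exists_root hF a
        have hcx : c ≠ x := by rintro rfl; exact hax hac
        exact ⟨c, by rw [hGne c hcx]; exact hc,
          (mreach_update_of_not_mreach hax).mpr hac⟩
    obtain ⟨c, hc, n, hn⟩ := main
    exact ⟨n, by rw [hn, hc]⟩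
  · intro v hv
    by_cases hvx : v = x
    · subst hvx; rw [hGx] at hv; exact absurd rfl hv
    · rw [hGne v hvx]
      exact hF.2 v (by rwa [hGne v hvx] at hv)

lemma roots_update (hyx : y ≠ x) :
    Finset.univ.filter (fun v => Function.update F x y v = v) =
      (Finset.univ.filter (fun v => F v = v)).erase x := by
  ext v
  by_cases hvx : v = x
  · subst hvx
    simp [Function.update_self, hyx]
  · simp [Function.update_of_ne hvx, hvx]

lemma roots_update_self :
    Finset.univ.filter (fun v => Function.update F x x v = v) =
      insert x (Finset.univ.filter (fun v => F v = v)) := by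
  ext v
  by_cases hvx : v = x
  · subst hvx
    simp [Function.update_self]
  · simp [Function.update_of_ne hvx, hvx]

lemma forestWeight_eq_aux (k : K → K → ℝ) (F : K → K) (x : K) :
    forestWeight k F = (if F x = x then 1 else k x (F x)) *
      ∏ v ∈ Finset.univ.filter (fun v => v ≠ x ∧ F v ≠ v), k v (F v) := by
  rw [forestWeight,
    ← Finset.prod_filter_mul_prod_filter_not (Finset.univ.filter (fun v => F v ≠ v))
      (fun v => v = x) (fun v => k v (F v))]
  congr 1
  · rw [Finset.filter_filter]
    by_cases hFx : F x = x
    · rw [if_pos hFx]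
      rw [Finset.filter_false_of_mem, Finset.prod_empty]
      rintro v - ⟨hv, rfl⟩
      exact hv hFx
    · rw [if_neg hFx]
      have : Finset.univ.filter (fun v => F v ≠ v ∧ v = x) = {x} := by
        ext v
        simp only [Finset.mem_filter, Finset.mem_univ, true_and, Finset.mem_singleton]
        constructor
        · rintro ⟨-, rfl⟩; rfl
        · rintro rfl; exact ⟨hFx, rfl⟩
      rw [this, Finset.prod_singleton]
  · rw [Finset.filter_filter]
    apply Finset.prod_congr _ (fun _ _ => rfl)
    ext v
    simp only [Finset.mem_filter]
    tauto

lemma prod_update_off (k : K → K → ℝ) (F : K → K) (x y : K) :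
    ∏ v ∈ Finset.univ.filter (fun v => v ≠ x ∧ Function.update F x y v ≠ v),
      k v (Function.update F x y v) =
    ∏ v ∈ Finset.univ.filter (fun v => v ≠ x ∧ F v ≠ v), k v (F v) := by
  have hset : Finset.univ.filter (fun v => v ≠ x ∧ Function.update F x y v ≠ v) =
      Finset.univ.filter (fun v => v ≠ x ∧ F v ≠ v) := by
    ext v
    by_cases hvx : v = x
    · simp [hvx]
    · simp [Function.update_of_ne hvx, hvx]
  rw [hset]
  apply Finset.prod_congr rfl
  intro v hv
  simp only [Finset.mem_filter] at hv
  rw [Function.update_of_ne hv.2.1]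

lemma forestWeight_update_root (hFx : F x = x) (hyx : y ≠ x) :
    forestWeight k (Function.update F x y) = k x y * forestWeight k F := by
  rw [forestWeight_eq_aux k (Function.update F x y) x, forestWeight_eq_aux k F x,
    if_pos hFx, Function.update_self, if_neg hyx, prod_update_off]
  ring

lemma forestWeight_update_arc (hFx : F x ≠ x) (hyx : y ≠ x) :
    k x (F x) * forestWeight k (Function.update F x y) = k x y * forestWeight k F := by
  rw [forestWeight_eq_aux k (Function.update F x y) x, forestWeight_eq_aux k F x,
    if_neg hFx, Function.update_self, if_neg hyx, prod_update_off]
  ring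

lemma twoForest_roots {z : K} (hF : IsTwoForest k F) (hz : F z = z) :
    ∃ r, r ≠ z ∧ F r = r ∧ Finset.univ.filter (fun v => F v = v) = {z, r} := by
  obtain ⟨a, b, hab, hset⟩ := Finset.card_eq_two.mp hF.2
  have hroot : ∀ c, c ∈ ({a, b} : Finset K) ↔ F c = c := by
    intro c
    rw [← hset]
    simp
  have hzmem : z ∈ ({a, b} : Finset K) := (hroot z).mpr hz
  rcases Finset.mem_insert.mp hzmem with rfl | hzb
  · exact ⟨b, hab.symm, (hroot b).mp (Finset.mem_insert_of_mem (Finset.mem_singleton_self b)),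
      hset⟩
  · have hzb' : z = b := Finset.mem_singleton.mp hzb
    subst hzb'
    refine ⟨a, hab, (hroot a).mp (Finset.mem_insert_self a _), ?_⟩
    rw [hset, Finset.pair_comm]

lemma twoForest_reach {z r : K} (hF : IsTwoForest k F)
    (hroots : Finset.univ.filter (fun v => F v = v) = {z, r}) (a : K) :
    mreach F a z ∨ mreach F a r := by
  obtain ⟨c, hc, hac⟩ := exists_root hF.1 a
  have : c ∈ ({z, r} : Finset K) := by
    rw [← hroots]; simp [hc]
  rcases Finset.mem_insert.mp this with rfl | hcr
  · exact Or.inl hac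
  · rw [Finset.mem_singleton.mp hcr] at hac
    exact Or.inr hac

end Forest

/-! ### Existence of a spanning tree and positivity of `treeWt` -/

section TreePos
variable {K : Type*} [Fintype K] [DecidableEq K] {k : K → K → ℝ}

def reachIn (k : K → K → ℝ) : ℕ → K → K → Prop
  | 0, a, b => a = b
  | (n+1), a, b => a = b ∨ ∃ c, 0 < k a c ∧ reachIn k n c b

lemma reachIn_of_reflTransGen {a b : K}
    (h : Relation.ReflTransGen (fun a b => 0 < k a b) a b) : ∃ n, reachIn k n a b := by
  induction h using Relation.ReflTransGen.head_induction_on with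
  | refl => exact ⟨0, rfl⟩
  | head hstep _ ih =>
    obtain ⟨n, hn⟩ := ih
    exact ⟨n + 1, Or.inr ⟨_, hstep, hn⟩⟩

lemma forestWeight_pos {F : K → K} (hF : IsSpForest k F) : 0 < forestWeight k F := by
  apply Finset.prod_pos
  intro v hv
  exact hF.2 v (Finset.mem_filter.mp hv).2

lemma exists_spTree (hirr : StronglyConnected k) (z : K) : ∃ F : K → K, IsSpTree k F z := by
  have hre : ∀ v : K, ∃ n, reachIn k n v z := fun v => reachIn_of_reflTransGen (hirr v z)
  set d : K → ℕ := fun v => Nat.find (hre v) with hd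
  have hstep : ∀ v, v ≠ z → ∃ w, 0 < k v w ∧ d w < d v := by
    intro v hv
    have h1 : reachIn k (d v) v z := Nat.find_spec (hre v)
    cases hdv : d v with
    | zero =>
      rw [hdv] at h1
      exact absurd h1 hv
    | succ m =>
      rw [hdv] at h1
      rcases h1 with h1 | ⟨w, hw, hwz⟩
      · exact absurd h1 hv
      · exact ⟨w, hw, by
          have : d w ≤ m := Nat.find_min' (hre w) hwz
          omega⟩
  have key : ∀ v, ∃ w, (v = z → w = v) ∧ (v ≠ z → 0 < k v w ∧ d w < d v) := by
    intro v
    by_cases hv : v = z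
    · exact ⟨v, fun _ => rfl, fun h => absurd hv h⟩
    · obtain ⟨w, hw⟩ := hstep v hv
      exact ⟨w, fun h => absurd h hv, fun _ => hw⟩
  choose F hF1 hF2 using key
  have hFz : F z = z := hF1 z rfl
  have hreach : ∀ N (a : K), d a ≤ N → ∃ n, F^[n] a = z := by
    intro N
    induction N with
    | zero =>
      intro a ha
      have h1 : reachIn k (d a) a z := Nat.find_spec (hre a)
      have hda : d a = 0 := Nat.le_zero.mp ha
      rw [hda] at h1
      exact ⟨0, h1⟩
    | succ N ih =>
      intro a ha
      by_cases haz : a = z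
      · exact ⟨0, haz⟩
      · obtain ⟨hpos, hlt⟩ := hF2 a haz
        obtain ⟨n, hn⟩ := ih (F a) (by omega)
        exact ⟨n + 1, by rw [Function.iterate_succ_apply]; exact hn⟩
  refine ⟨F, ⟨?_, ?_⟩, ?_⟩
  · intro a
    obtain ⟨n, hn⟩ := hreach (d a) a le_rfl
    exact ⟨n, by rw [hn, hFz]⟩
  · intro v hv
    by_cases hvz : v = z
    · subst hvz; exact absurd hFz hv
    · exact (hF2 v hvz).1
  · ext v
    simp only [Finset.mem_filter, Finset.mem_univ, true_and, Finset.mem_singleton]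
    constructor
    · intro h
      by_contra hvz
      have := (hF2 v hvz).2
      rw [h] at this
      omega
    · rintro rfl; exact hFz

lemma treeWt_pos (hirr : StronglyConnected k) (z : K) : 0 < treeWt k z := by
  obtain ⟨F, hF⟩ := exists_spTree hirr z
  apply Finset.sum_pos
  · intro G hG
    exact forestWeight_pos (Finset.mem_filter.mp hG).2.1
  · exact ⟨F, Finset.mem_filter.mpr ⟨Finset.mem_univ F, hF⟩⟩

/-! ### Maximum principle / uniqueness -/

lemma harmonic_le (hk : ∀ x y : K, x ≠ y → 0 ≤ k x y) (hirr : StronglyConnected k) (z : K)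
    (g : K → ℝ) (hg : ∀ x, x ≠ z → ∑ y, k x y * (g y - g x) = 0) :
    ∀ v, g v ≤ g z := by
  have claim : ∀ a : K, Relation.ReflTransGen (fun a b => 0 < k a b) a z →
      (∀ y, g y ≤ g a) → g z = g a := by
    intro a h
    induction h using Relation.ReflTransGen.head_induction_on with
    | refl => intro _; rfl
    | @head a c hstep hrest ih =>
      intro hmax
      by_cases haz : a = z
      · rw [haz]
      · have hterms : ∀ y ∈ Finset.univ, k a y * (g y - g a) ≤ 0 := by
          intro y _
          by_cases hya : y = a
          · subst hya; simp
          · exact mul_nonpos_of_nonneg_of_nonpos (hk a y (Ne.symm hya))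
              (sub_nonpos.mpr (hmax y))
        have hall := (Finset.sum_eq_zero_iff_of_nonpos hterms).mp (hg a haz)
        have hc : k a c * (g c - g a) = 0 := hall c (Finset.mem_univ c)
        have hgc : g c = g a := by
          have := mul_eq_zero.mp hc
          rcases this with h | h
          · exact absurd h (ne_of_gt hstep)
          · linarith [sub_eq_zero.mp h]
        rw [← hgc] at hmax ⊢
        exact ih hmax
  obtain ⟨a₀, -, ha₀⟩ := Finset.exists_max_image Finset.univ g ⟨z, Finset.mem_univ z⟩
  have hmax : ∀ y, g y ≤ g a₀ := fun y => ha₀ y (Finset.mem_univ y)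
  have := claim a₀ (hirr a₀ z) hmax
  intro v
  rw [this]
  exact hmax v

lemma harmonic_eq_zero (hk : ∀ x y : K, x ≠ y → 0 ≤ k x y) (hirr : StronglyConnected k) (z : K)
    (g : K → ℝ) (hgz : g z = 0) (hg : ∀ x, x ≠ z → ∑ y, k x y * (g y - g x) = 0) :
    ∀ v, g v = 0 := by
  have h1 : ∀ v, g v ≤ 0 := by
    have := harmonic_le hk hirr z g hg
    intro v; rw [← hgz]; exact this v
  have h2 : ∀ v, -g v ≤ 0 := by
    have hg' : ∀ x, x ≠ z → ∑ y, k x y * ((-g) y - (-g) x) = 0 := by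
      intro x hx
      have heq : ∑ y, k x y * ((-g) y - (-g) x) = -∑ y, k x y * (g y - g x) := by
        rw [← Finset.sum_neg_distrib]
        apply Finset.sum_congr rfl
        intro y _
        simp only [Pi.neg_apply]
        ring
      rw [heq, hg x hx, neg_zero]
    have := harmonic_le hk hirr z (-g) hg'
    intro v
    have h := this v
    simpa [hgz] using h
  intro v
  have := h1 v
  have := h2 v
  linarith

end TreePos

section Key
variable {K : Type*} [Fintype K] [DecidableEq K]

set_option maxHeartbeats 1000000 in
lemma key_identity (k : K → K → ℝ) (hk : ∀ x y : K, x ≠ y → 0 ≤ k x y) {x z : K}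
    (hxz : x ≠ z) :
    (∑ y, k x y * wSep k y z) + treeWt k z = (∑ y, k x y) * wSep k x z := by
  classical
  set Q : Finset K := (Finset.univ.erase x).filter (fun y => 0 < k x y) with hQdef
  have hQmem : ∀ y, y ∈ Q ↔ y ≠ x ∧ 0 < k x y := by
    intro y; simp [hQdef, Finset.mem_filter, Finset.mem_erase]
  -- reduce the sums to sums over Q
  have hzero : ∀ y ∈ Finset.univ.erase x, y ∉ Q → k x y = 0 := by
    intro y hy hyQ
    have h0 : ¬ 0 < k x y := fun h => hyQ (Finset.mem_filter.mpr ⟨hy, h⟩)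
    exact le_antisymm (not_lt.mp h0) (hk x y (Finset.ne_of_mem_erase hy).symm)
  have hL : ∑ y, k x y * wSep k y z = (∑ y ∈ Q, k x y * wSep k y z) + k x x * wSep k x z := by
    rw [← Finset.sum_erase_add Finset.univ _ (Finset.mem_univ x)]
    congr 1
    refine (Finset.sum_subset (Finset.filter_subset _ _) ?_).symm
    intro y hy hyQ
    rw [hzero y hy hyQ, zero_mul]
  have hR : (∑ y, k x y) = (∑ y ∈ Q, k x y) + k x x := by
    rw [← Finset.sum_erase_add Finset.univ _ (Finset.mem_univ x)]
    congr 1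
    refine (Finset.sum_subset (Finset.filter_subset _ _) ?_).symm
    intro y hy hyQ
    exact hzero y hy hyQ
  -- the pair sums
  set S_L : Finset (K × (K → K)) := (Q ×ˢ Finset.univ).filter
    (fun p => IsTwoForest k p.2 ∧ p.2 z = z ∧ ¬∃ n : ℕ, p.2^[n] x = z) with hSLdef
  set S_R : Finset (K × (K → K)) := (Q ×ˢ Finset.univ).filter
    (fun p => IsTwoForest k p.2 ∧ p.2 z = z ∧ ¬∃ n : ℕ, p.2^[n] p.1 = z) with hSRdef
  have hSL : ∑ p ∈ S_L, k x p.1 * forestWeight k p.2 = ∑ y ∈ Q, k x y * wSep k x z := by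
    rw [hSLdef, Finset.sum_filter, Finset.sum_product]
    apply Finset.sum_congr rfl
    intro y _
    rw [wSep, Finset.mul_sum, Finset.sum_filter]
  have hSR : ∑ p ∈ S_R, k x p.1 * forestWeight k p.2 = ∑ y ∈ Q, k x y * wSep k y z := by
    rw [hSRdef, Finset.sum_filter, Finset.sum_product]
    apply Finset.sum_congr rfl
    intro y _
    rw [wSep, Finset.mul_sum, Finset.sum_filter]
  -- split S_L in three parts, S_R in two parts
  set A : (K × (K → K)) → Prop := fun p => ∃ n : ℕ, p.2^[n] p.1 = z with hAdef
  set B : (K × (K → K)) → Prop := fun p => p.2 x = x with hBdef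
  set C : (K × (K → K)) → Prop := fun p => ∃ n : ℕ, p.2^[n] x = z with hCdef
  have e1 : (S_L.filter A).filter B = S_L.filter (fun p => A p ∧ B p) := by
    ext p; simp only [Finset.mem_filter]; tauto
  have e2 : (S_L.filter A).filter (fun p => ¬ B p) = S_L.filter (fun p => A p ∧ ¬ B p) := by
    ext p; simp only [Finset.mem_filter]; tauto
  have splitL : ∑ p ∈ S_L, k x p.1 * forestWeight k p.2 =
      (∑ p ∈ S_L.filter (fun p => A p ∧ B p), k x p.1 * forestWeight k p.2) +
      (∑ p ∈ S_L.filter (fun p => A p ∧ ¬ B p), k x p.1 * forestWeight k p.2) +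
      (∑ p ∈ S_L.filter (fun p => ¬ A p), k x p.1 * forestWeight k p.2) := by
    rw [← Finset.sum_filter_add_sum_filter_not S_L A,
      ← Finset.sum_filter_add_sum_filter_not (S_L.filter A) B, e1, e2]
  have splitR : ∑ p ∈ S_R, k x p.1 * forestWeight k p.2 =
      (∑ p ∈ S_R.filter C, k x p.1 * forestWeight k p.2) +
      (∑ p ∈ S_R.filter (fun p => ¬ C p), k x p.1 * forestWeight k p.2) := by
    rw [Finset.sum_filter_add_sum_filter_not]
  have memS_L : ∀ (y : K) (F : K → K), (y, F) ∈ S_L ↔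
      (y ≠ x ∧ 0 < k x y) ∧ IsTwoForest k F ∧ F z = z ∧ ¬mreach F x z := by
    intro y F
    rw [hSLdef]
    simp only [Finset.mem_filter, Finset.mem_product, Finset.mem_univ, and_true, hQmem, mreach]
  have memS_R : ∀ (y : K) (F : K → K), (y, F) ∈ S_R ↔
      (y ≠ x ∧ 0 < k x y) ∧ IsTwoForest k F ∧ F z = z ∧ ¬mreach F y z := by
    intro y F
    rw [hSRdef]
    simp only [Finset.mem_filter, Finset.mem_product, Finset.mem_univ, and_true, hQmem, mreach]
  have hupd_self : ∀ (F : K → K), F x = x → Function.update F x x = F := by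
    intro F hFx
    funext v
    by_cases hv : v = x
    · subst hv; rw [Function.update_self, hFx]
    · rw [Function.update_of_ne hv]
  -- Bijection 1 : S_L1 ↔ spanning trees rooted at z
  have bij1 : ∑ p ∈ S_L.filter (fun p => A p ∧ B p), k x p.1 * forestWeight k p.2 =
      treeWt k z := by
    rw [treeWt]
    apply Finset.sum_nbij' (i := fun p : K × (K → K) => Function.update p.2 x p.1)
      (j := fun G : K → K => (G x, Function.update G x x))
    · rintro ⟨y, F⟩ hp
      rw [Finset.mem_filter, memS_L] at hp
      obtain ⟨⟨⟨hyx, hkxy⟩, hTF, hz, hnxz⟩, hyz0, hFx0⟩ := hp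
      have hyz : mreach F y z := hyz0
      have hFx : F x = x := hFx0
      obtain ⟨r, hrz, hFr, hroots⟩ := twoForest_roots hTF hz
      have hxr : x = r := by
        have hx : x ∈ ({z, r} : Finset K) := by
          rw [← hroots]; simp [hFx]
        rcases Finset.mem_insert.mp hx with h | h
        · exact absurd h hxz
        · exact Finset.mem_singleton.mp h
      rw [← hxr] at hroots
      have hnyx : ¬mreach F y x := by
        intro h
        exact hxz (fixed_reach_unique hFx hz h hyz)
      refine Finset.mem_filter.mpr ⟨Finset.mem_univ _, ?_, ?_⟩
      · exact forest_update hTF.1 hyx hkxy hnyx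
      · rw [roots_update hyx, hroots]
        ext v
        simp only [Finset.mem_erase, Finset.mem_insert, Finset.mem_singleton]
        constructor
        · rintro ⟨hvx, h | h⟩
          · exact h
          · exact absurd h hvx
        · rintro rfl
          exact ⟨fun h => hxz h.symm, Or.inl rfl⟩
    · intro G hG
      rw [Finset.mem_filter] at hG
      obtain ⟨-, hGforest, hGroots⟩ := hG
      have hGxne : G x ≠ x := by
        intro h
        have : x ∈ Finset.univ.filter (fun v => G v = v) :=
          Finset.mem_filter.mpr ⟨Finset.mem_univ x, h⟩
        rw [hGroots] at this
        exact hxz (Finset.mem_singleton.mp this)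
      have hGz : G z = z := by
        have : z ∈ Finset.univ.filter (fun v => G v = v) := by
          rw [hGroots]; exact Finset.mem_singleton_self z
        exact (Finset.mem_filter.mp this).2
      have hky : 0 < k x (G x) := hGforest.2 x hGxne
      have hallz : ∀ a, mreach G a z := by
        intro a
        obtain ⟨c, hc, hac⟩ := exists_root hGforest a
        have : c ∈ Finset.univ.filter (fun v => G v = v) :=
          Finset.mem_filter.mpr ⟨Finset.mem_univ c, hc⟩
        rw [hGroots] at this
        rwa [Finset.mem_singleton.mp this] at hac
      have hnGxx : ¬mreach G (G x) x := by
        intro h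
        exact hGxne (mreach_antisymm (hGforest.1 x) ⟨1, by simp⟩ h).symm
      rw [Finset.mem_filter, memS_L]
      refine ⟨⟨⟨hGxne, hky⟩, ?_, ?_, ?_⟩, ?_, ?_⟩
      · constructor
        · exact forest_update_self hGforest
        · rw [roots_update_self, hGroots]
          exact Finset.card_pair hxz
      · rw [Function.update_of_ne (Ne.symm hxz)]; exact hGz
      · intro h
        have hfix : Function.update G x x x = x := Function.update_self x x G
        exact hxz (mreach_fixed_eq hfix h).symm
      · show mreach (Function.update G x x) (G x) z
        exact (mreach_update_of_not_mreach hnGxx).mpr (hallz (G x))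
      · exact Function.update_self x x G
    · rintro ⟨y, F⟩ hp
      rw [Finset.mem_filter, memS_L] at hp
      obtain ⟨⟨⟨hyx, -⟩, -, -, -⟩, -, hFx0⟩ := hp
      have hFx : F x = x := hFx0
      have h1 : Function.update F x y x = y := Function.update_self x y F
      refine Prod.ext ?_ ?_
      · exact h1
      · show Function.update (Function.update F x y) x x = F
        rw [Function.update_idem, hupd_self F hFx]
    · intro G hG
      show Function.update (Function.update G x x) x (G x) = G
      rw [Function.update_idem, Function.update_eq_self]
    · rintro ⟨y, F⟩ hp
      rw [Finset.mem_filter, memS_L] at hp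
      obtain ⟨⟨⟨hyx, -⟩, -, -, -⟩, -, hFx0⟩ := hp
      exact (forestWeight_update_root hFx0 hyx).symm
  have bij2 : ∑ p ∈ S_L.filter (fun p => A p ∧ ¬ B p), k x p.1 * forestWeight k p.2 =
      ∑ p ∈ S_R.filter C, k x p.1 * forestWeight k p.2 := by
    apply Finset.sum_nbij'
      (i := fun p : K × (K → K) => (p.2 x, Function.update p.2 x p.1))
      (j := fun p : K × (K → K) => (p.2 x, Function.update p.2 x p.1))
    · rintro ⟨y, F⟩ hp
      rw [Finset.mem_filter, memS_L] at hp
      obtain ⟨⟨⟨hyx, hkxy⟩, hTF, hz, hnxz0⟩, hyz0, hFxne0⟩ := hp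
      have hyz : mreach F y z := hyz0
      have hnxz : ¬mreach F x z := hnxz0
      have hFxne : F x ≠ x := hFxne0
      obtain ⟨r, hrz, hFr, hroots⟩ := twoForest_roots hTF hz
      have hxr : mreach F x r := (twoForest_reach hTF hroots x).resolve_left hnxz
      have hxner : x ≠ r := by rintro rfl; exact hFxne hFr
      have hnyx : ¬mreach F y x := by
        intro h
        exact hrz (fixed_reach_unique hz hFr hyz (mreach_trans h hxr)).symm
      set G := Function.update F x y with hGdef
      have hGforest : IsSpForest k G := forest_update hTF.1 hyx hkxy hnyx
      have hGroots : Finset.univ.filter (fun v => G v = v) = {z, r} := by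
        rw [hGdef, roots_update hyx, hroots]
        apply Finset.erase_eq_of_notMem
        simp only [Finset.mem_insert, Finset.mem_singleton]
        push_neg
        exact ⟨hxz, hxner⟩
      have hTG : IsTwoForest k G := ⟨hGforest, by rw [hGroots]; exact Finset.card_pair (Ne.symm hrz)⟩
      have hGz : G z = z := by rw [hGdef, Function.update_of_ne (Ne.symm hxz)]; exact hz
      have hGr : G r = r := by rw [hGdef, Function.update_of_ne (Ne.symm hxner)]; exact hFr
      have hky' : 0 < k x (F x) := hTF.1.2 x hFxne
      have hny'x : ¬mreach F (F x) x := by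
        intro h
        exact hFxne (mreach_antisymm (hTF.1.1 x) ⟨1, by simp⟩ h).symm
      have hy'r : mreach F (F x) r := mreach_tail hxr hxner
      have hGy'r : mreach G (F x) r := (mreach_update_of_not_mreach hny'x).mpr hy'r
      have hny'z : ¬mreach G (F x) z := by
        intro h
        exact (Ne.symm hrz) (fixed_reach_unique hGz hGr h hGy'r)
      have hGyz : mreach G y z := (mreach_update_of_not_mreach hnyx).mpr hyz
      have hGxy : mreach G x y := ⟨1, by simp [hGdef]⟩
      have hGxz : mreach G x z := mreach_trans hGxy hGyz
      rw [Finset.mem_filter, memS_R]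
      exact ⟨⟨⟨hFxne, hky'⟩, hTG, hGz, hny'z⟩, hGxz⟩
    · rintro ⟨y', G⟩ hp
      rw [Finset.mem_filter, memS_R] at hp
      obtain ⟨⟨⟨hy'x, hky'⟩, hTG, hGz, hny'z0⟩, hGxz0⟩ := hp
      have hny'z : ¬mreach G y' z := hny'z0
      have hGxz : mreach G x z := hGxz0
      obtain ⟨r, hrz, hGr, hroots⟩ := twoForest_roots hTG hGz
      have hy'r : mreach G y' r := (twoForest_reach hTG hroots y').resolve_left hny'z
      have hGxne : G x ≠ x := by
        intro h
        exact hxz (mreach_fixed_eq h hGxz).symm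
      have hky : 0 < k x (G x) := hTG.1.2 x hGxne
      have hny'x : ¬mreach G y' x := fun h => hny'z (mreach_trans h hGxz)
      set F := Function.update G x y' with hFdef
      have hFforest : IsSpForest k F := forest_update hTG.1 hy'x hky' hny'x
      have hxner : x ≠ r := by rintro rfl; exact hGxne hGr
      have hFroots : Finset.univ.filter (fun v => F v = v) = {z, r} := by
        rw [hFdef, roots_update hy'x, hroots]
        apply Finset.erase_eq_of_notMem
        simp only [Finset.mem_insert, Finset.mem_singleton]
        push_neg
        exact ⟨hxz, hxner⟩
      have hTF : IsTwoForest k F := ⟨hFforest, by rw [hFroots]; exact Finset.card_pair (Ne.symm hrz)⟩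
      have hFz : F z = z := by rw [hFdef, Function.update_of_ne (Ne.symm hxz)]; exact hGz
      have hFr : F r = r := by rw [hFdef, Function.update_of_ne (Ne.symm hxner)]; exact hGr
      have hFy'r : mreach F y' r := (mreach_update_of_not_mreach hny'x).mpr hy'r
      have hFxy' : mreach F x y' := ⟨1, by simp [hFdef]⟩
      have hFxr : mreach F x r := mreach_trans hFxy' hFy'r
      have hnFxz : ¬mreach F x z := by
        intro h
        exact (Ne.symm hrz) (fixed_reach_unique hFz hFr h hFxr)
      have hGGxz : mreach G (G x) z := mreach_tail hGxz hxz
      have hnGxx : ¬mreach G (G x) x := by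
        intro h
        exact hGxne (mreach_antisymm (hTG.1.1 x) ⟨1, by simp⟩ h).symm
      have hFGxz : mreach F (G x) z := (mreach_update_of_not_mreach hnGxx).mpr hGGxz
      rw [Finset.mem_filter, memS_L]
      refine ⟨⟨⟨hGxne, hky⟩, hTF, hFz, hnFxz⟩, hFGxz, ?_⟩
      show ¬ F x = x
      rw [hFdef, Function.update_self]
      exact hy'x
    · rintro ⟨y, F⟩ hp
      rw [Finset.mem_filter, memS_L] at hp
      obtain ⟨⟨⟨hyx, -⟩, -, -, -⟩, -, -⟩ := hp
      refine Prod.ext ?_ ?_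
      · show Function.update F x y x = y
        exact Function.update_self x y F
      · show Function.update (Function.update F x y) x (F x) = F
        rw [Function.update_idem, Function.update_eq_self]
    · rintro ⟨y', G⟩ hp
      refine Prod.ext ?_ ?_
      · show Function.update G x y' x = y'
        exact Function.update_self x y' G
      · show Function.update (Function.update G x y') x (G x) = G
        rw [Function.update_idem, Function.update_eq_self]
    · rintro ⟨y, F⟩ hp
      rw [Finset.mem_filter, memS_L] at hp
      obtain ⟨⟨⟨hyx, -⟩, -, -, -⟩, -, hFxne0⟩ := hp
      have hFxne : F x ≠ x := hFxne0
      exact (forestWeight_update_arc hFxne hyx).symm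
  -- coincidence : S_L3 = S_Rβ
  have bij3 : S_L.filter (fun p => ¬ A p) = S_R.filter (fun p => ¬ C p) := by
    rw [hSLdef, hSRdef, Finset.filter_filter, Finset.filter_filter]
    apply Finset.filter_congr
    intro p _
    simp only [hAdef, hCdef]
    tauto
  have bij3' : ∑ p ∈ S_L.filter (fun p => ¬ A p), k x p.1 * forestWeight k p.2 =
      ∑ p ∈ S_R.filter (fun p => ¬ C p), k x p.1 * forestWeight k p.2 := by rw [bij3]
  have hmul : (∑ y ∈ Q, k x y) * wSep k x z = ∑ y ∈ Q, k x y * wSep k x z :=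
    Finset.sum_mul _ _ _
  rw [hL, hR]
  linarith [splitL, splitR, bij1, bij2, bij3', hSL, hSR, hmul]
end Key

section Final
variable {K : Type*} [Fintype K] [DecidableEq K]

lemma wSep_self (k : K → K → ℝ) (z : K) : wSep k z z = 0 := by
  rw [wSep]
  apply Finset.sum_eq_zero
  intro F hF
  rw [Finset.mem_filter] at hF
  exact absurd ⟨0, rfl⟩ hF.2.2.2

end Final

/-- Graphical representation of mean first-passage times: `τ(x,z) = w(x,z)/w(z)` for `x ≠ z`;
equivalently, the function `x ↦ w(x,z)/w(z)` (vanishing at `z`) satisfies the first-passage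
Poisson equation. -/
theorem mfpt_graphical_representation
    {K : Type*} [Fintype K] [DecidableEq K]
    (k : K → K → ℝ) (hk : ∀ x y : K, x ≠ y → 0 ≤ k x y)
    (hirr : StronglyConnected k)
    (τ : K → K → ℝ) (hτ0 : ∀ z, τ z z = 0)
    (hτ : ∀ z x, x ≠ z → (∑ y, k x y * (τ y z - τ x z)) + 1 = 0) :
    (∀ z x, x ≠ z → τ x z = wSep k x z / treeWt k z) ∧
    (∀ z x, x ≠ z →
      (∑ y, k x y *
        ((if y = z then 0 else wSep k y z / treeWt k z) -
         (if x = z then 0 else wSep k x z / treeWt k z))) + 1 = 0) := by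
  have master : ∀ (z : K) (v : K), τ v z = wSep k v z / treeWt k z := by
    intro z
    have hW : 0 < treeWt k z := treeWt_pos hirr z
    have hWne : treeWt k z ≠ 0 := hW.ne'
    set τ' : K → ℝ := fun v => wSep k v z / treeWt k z with hτ'def
    have hτ'z : τ' z = 0 := by rw [hτ'def]; simp [wSep_self]
    have poisson' : ∀ x, x ≠ z → (∑ y, k x y * (τ' y - τ' x)) + 1 = 0 := by
      intro x hxz
      have hkey := key_identity k hk hxz
      have h1 : ∀ y : K, k x y * (τ' y - τ' x) =
          (k x y * wSep k y z - k x y * wSep k x z) / treeWt k z := by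
        intro y
        rw [hτ'def]
        field_simp
      have h2 : (∑ y, k x y * (τ' y - τ' x)) =
          ((∑ y, k x y * wSep k y z) - (∑ y, k x y) * wSep k x z) / treeWt k z := by
        rw [Finset.sum_congr rfl (fun y _ => h1 y), ← Finset.sum_div, Finset.sum_sub_distrib,
          Finset.sum_mul]
      rw [h2]
      have h3 : (∑ y, k x y * wSep k y z) - (∑ y, k x y) * wSep k x z = -treeWt k z := by
        linarith [hkey]
      rw [h3, neg_div, div_self hWne]
      ring
    set g : K → ℝ := fun v => τ v z - τ' v with hgdef
    have hgz : g z = 0 := by rw [hgdef]; simp [hτ0, hτ'z]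
    have hharm : ∀ x, x ≠ z → ∑ y, k x y * (g y - g x) = 0 := by
      intro x hxz
      have h1 : ∀ y : K, k x y * (g y - g x) =
          k x y * (τ y z - τ x z) - k x y * (τ' y - τ' x) := by
        intro y; rw [hgdef]; ring
      rw [Finset.sum_congr rfl (fun y _ => h1 y), Finset.sum_sub_distrib]
      have := hτ z x hxz
      have := poisson' x hxz
      linarith
    have := harmonic_eq_zero hk hirr z g hgz hharm
    intro v
    have hv := this v
    rw [hgdef] at hv
    simp only at hv
    linarith [hv]
  constructor
  · intro z x _
    exact master z x
  · intro z x hxz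
    have hsum : ∀ y : K, (if y = z then 0 else wSep k y z / treeWt k z) = τ y z := by
      intro y
      by_cases hy : y = z
      · subst hy; simp [hτ0]
      · rw [if_neg hy, master z y]
    simp only [hsum]
    exact hτ z x hxz
end

section
/- Let f : K → ℝ be centered, ⟨f⟩^s = 0, let V be the unique solution of LV + f = 0 with ⟨V⟩^s = 0, and for y ∈ K let V_y be the unique function satisfying LV_y(x) + f(x) = 0 for all x ≠ y and V_y(y) = 0 (the expected accumulation of f before first reaching y). Then for all x, y ∈ K: V(x) − V(y) = V_y(x). -/
open scoped Classical

/-- Maximum principle for harmonic functions off `y`. -/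
lemma harmonic_le_at {K : Type*} [Fintype K] [DecidableEq K]
    (k : K → K → ℝ) (hk : ∀ x y : K, x ≠ y → 0 ≤ k x y)
    (hirr : StronglyConnected k) (y : K) (W : K → ℝ)
    (hW : ∀ x, x ≠ y → ∑ z, k x z * (W z - W x) = 0) :
    ∀ x, W x ≤ W y := by
  obtain ⟨x0, -, hx0⟩ := Finset.exists_max_image Finset.univ W ⟨y, Finset.mem_univ y⟩
  have key : ∀ a, Relation.ReflTransGen (fun a b => 0 < k a b) a y →
      W a = W x0 → W y = W x0 := by
    intro a hpath
    induction hpath using Relation.ReflTransGen.head_induction_on with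
    | refl => exact fun h => h
    | head hab _ ih =>
      rename_i a b _
      intro ha
      by_cases hay : a = y
      · rwa [← hay]
      · have hsum := hW a hay
        have hnonpos : ∀ z ∈ Finset.univ, k a z * (W z - W a) ≤ 0 := by
          intro z _
          by_cases hza : z = a
          · simp [hza]
          · exact mul_nonpos_of_nonneg_of_nonpos (hk a z (Ne.symm hza))
              (by rw [ha]; linarith [hx0 z (Finset.mem_univ z)])
        have hzero := (Finset.sum_eq_zero_iff_of_nonpos hnonpos).mp hsum
        have hb := hzero b (Finset.mem_univ b)
        have : W b = W a := by
          rcases mul_eq_zero.mp hb with h | h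
          · exact absurd h (ne_of_gt hab)
          · linarith
        exact ih (this.trans ha)
  have hyM : W y = W x0 := key x0 (hirr x0 y) rfl
  intro x
  rw [hyM]
  exact hx0 x (Finset.mem_univ x)

/-- The difference of the centered quasipotential equals the expected accumulation before
first reaching `y`: `V(x) - V(y) = V_y(x)`. -/
theorem quasipotential_difference_eq_stopped_accumulation
    {K : Type*} [Fintype K] [DecidableEq K]
    (k : K → K → ℝ) (hk : ∀ x y : K, x ≠ y → 0 ≤ k x y)
    (hirr : StronglyConnected k)
    (ρ : K → ℝ) (hρpos : ∀ x, 0 < ρ x) (hρsum : ∑ x, ρ x = 1)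
    (hρstat : Matrix.vecMul ρ (gen k) = 0)
    (f : K → ℝ) (hf : ∑ x, f x * ρ x = 0)
    (V : K → ℝ) (hV : ∀ x, (∑ y, k x y * (V y - V x)) + f x = 0)
    (hVcent : ∑ x, V x * ρ x = 0)
    (y : K) (Vy : K → ℝ)
    (hVy : ∀ x, x ≠ y → (∑ z, k x z * (Vy z - Vy x)) + f x = 0)
    (hVy0 : Vy y = 0) :
    ∀ x, V x - V y = Vy x := by
  set W : K → ℝ := fun x => V x - V y - Vy x with hWdef
  have hWharm : ∀ x, x ≠ y → ∑ z, k x z * (W z - W x) = 0 := by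
    intro x hxy
    have h1 := hV x
    have h2 := hVy x hxy
    have : ∑ z, k x z * (W z - W x)
        = (∑ z, k x z * (V z - V x)) - ∑ z, k x z * (Vy z - Vy x) := by
      rw [← Finset.sum_sub_distrib]
      apply Finset.sum_congr rfl
      intro z _
      simp only [hWdef]
      ring
    rw [this]; linarith
  have hWneg : ∀ x, x ≠ y → ∑ z, k x z * ((-W) z - (-W) x) = 0 := by
    intro x hxy
    have := hWharm x hxy
    have heq : ∑ z, k x z * ((-W) z - (-W) x) = -∑ z, k x z * (W z - W x) := by
      rw [← Finset.sum_neg_distrib]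
      apply Finset.sum_congr rfl
      intro z _
      simp only [Pi.neg_apply]
      ring
    rw [heq, this, neg_zero]
  have h1 := harmonic_le_at k hk hirr y W hWharm
  have h2 := harmonic_le_at k hk hirr y (-W) hWneg
  intro x
  have hWy : W y = 0 := by simp [hWdef, hVy0]
  have ha := h1 x
  have hb := h2 x
  simp only [Pi.neg_apply] at hb
  have : W x = 0 := by rw [hWy] at ha; linarith
  simpa [hWdef, sub_eq_zero, sub_eq_iff_eq_add] using this
end

section
/- Let f : K → ℝ be centered, ⟨f⟩^s = 0, and let V be any solution of LV + f = 0 on K. Then for all x, y ∈ K: |V(x) − V(y)| ≤ ‖f‖ · min{τ(x,y), τ(y,x)}, where ‖f‖ = max_z |f(z)|. -/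
open scoped Classical

/-- Minimum principle: a function superharmonic away from `y` that vanishes at `y`
is nonnegative. -/
lemma min_principle {K : Type*} [Fintype K] [DecidableEq K] [Nonempty K]
    (k : K → K → ℝ) (hk : ∀ x y : K, x ≠ y → 0 ≤ k x y)
    (hirr : StronglyConnected k) (y : K) (W : K → ℝ) (hWy : W y = 0)
    (hsup : ∀ x, x ≠ y → ∑ z, k x z * (W z - W x) ≤ 0) :
    ∀ x, 0 ≤ W x := by
  obtain ⟨m, -, hm⟩ := Finset.exists_min_image Finset.univ W Finset.univ_nonempty
  intro x
  have hmx : W m ≤ W x := hm x (Finset.mem_univ x)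
  by_contra hneg
  push_neg at hneg
  have hWm : W m < 0 := lt_of_le_of_lt hmx hneg
  have key : ∀ c, Relation.ReflTransGen (fun a b => 0 < k a b) m c → W c = W m := by
    intro c hc
    induction hc with
    | refl => rfl
    | tail hab hbc ih =>
      rename_i b c
      have hby : b ≠ y := by
        intro h; rw [h, hWy] at ih; exact absurd ih.symm (ne_of_lt hWm)
      have hs := hsup b hby
      have hnn : ∀ z ∈ Finset.univ, (0:ℝ) ≤ k b z * (W z - W b) := by
        intro z _
        by_cases hz : z = b
        · simp [hz]
        · exact mul_nonneg (hk b z (Ne.symm hz))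
            (by rw [ih]; linarith [hm z (Finset.mem_univ z)])
      have hzero : ∑ z, k b z * (W z - W b) = 0 :=
        le_antisymm hs (Finset.sum_nonneg hnn)
      have := (Finset.sum_eq_zero_iff_of_nonneg hnn).mp hzero c (Finset.mem_univ c)
      have hWc : W c - W b = 0 := by
        rcases mul_eq_zero.mp this with h | h
        · exact absurd h (ne_of_gt hbc)
        · exact h
      rw [← ih]; linarith
  have := key y (hirr m y)
  rw [hWy] at this
  exact absurd this.symm (ne_of_lt hWm)

/-- One-sided comparison: `V x - V y ≤ M * τ x y` whenever `f ≤ M` pointwise. -/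
lemma one_side {K : Type*} [Fintype K] [DecidableEq K] [Nonempty K]
    (k : K → K → ℝ) (hk : ∀ x y : K, x ≠ y → 0 ≤ k x y)
    (hirr : StronglyConnected k)
    (τ : K → K → ℝ) (hτ0 : ∀ z, τ z z = 0)
    (hτ : ∀ z x, x ≠ z → (∑ y, k x y * (τ y z - τ x z)) + 1 = 0)
    (f : K → ℝ) (V : K → ℝ)
    (hV : ∀ x, (∑ y, k x y * (V y - V x)) + f x = 0)
    (M : ℝ) (hM : ∀ z, f z ≤ M) :
    ∀ x y, V x - V y ≤ M * τ x y := by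
  intro x y
  set W : K → ℝ := fun z => M * τ z y - (V z - V y) with hW
  have hWy : W y = 0 := by simp [hW, hτ0 y]
  have hsup : ∀ z, z ≠ y → ∑ w, k z w * (W w - W z) ≤ 0 := by
    intro z hz
    have h1 : ∑ w, k z w * (W w - W z)
        = M * (∑ w, k z w * (τ w y - τ z y)) - ∑ w, k z w * (V w - V z) := by
      rw [Finset.mul_sum, ← Finset.sum_sub_distrib]
      exact Finset.sum_congr rfl (fun w _ => by simp [hW]; ring)
    have h2 : (∑ w, k z w * (τ w y - τ z y)) = -1 := by
      have := hτ y z hz; linarith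
    have h3 : (∑ w, k z w * (V w - V z)) = -(f z) := by
      have := hV z; linarith
    rw [h1, h2, h3]
    have := hM z; linarith
  have := min_principle k hk hirr y W hWy hsup x
  simp only [hW] at this
  linarith

/-- Bound via mean first-passage times: `|V(x) - V(y)| ≤ ‖f‖ · min{τ(x,y), τ(y,x)}` with
`‖f‖ = max_z |f(z)|`. -/
theorem quasipotential_difference_bound
    {K : Type*} [Fintype K] [DecidableEq K] [Nonempty K]
    (k : K → K → ℝ) (hk : ∀ x y : K, x ≠ y → 0 ≤ k x y)
    (hirr : StronglyConnected k)
    (ρ : K → ℝ) (hρpos : ∀ x, 0 < ρ x) (hρsum : ∑ x, ρ x = 1)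
    (hρstat : Matrix.vecMul ρ (gen k) = 0)
    (τ : K → K → ℝ) (hτ0 : ∀ z, τ z z = 0)
    (hτ : ∀ z x, x ≠ z → (∑ y, k x y * (τ y z - τ x z)) + 1 = 0)
    (f : K → ℝ) (hf : ∑ x, f x * ρ x = 0)
    (V : K → ℝ) (hV : ∀ x, (∑ y, k x y * (V y - V x)) + f x = 0) :
    ∀ x y, |V x - V y| ≤
      (Finset.univ.sup' Finset.univ_nonempty fun z => |f z|) * min (τ x y) (τ y x) := by
  set M := Finset.univ.sup' Finset.univ_nonempty fun z => |f z| with hMdef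
  have hMabs : ∀ z, |f z| ≤ M :=
    fun z => Finset.le_sup' (fun z => |f z|) (Finset.mem_univ z)
  have hMub : ∀ z, f z ≤ M := fun z => le_trans (le_abs_self _) (hMabs z)
  have hMlb : ∀ z, -f z ≤ M := fun z => le_trans (neg_le_abs _) (hMabs z)
  have hV' : ∀ x, (∑ y, k x y * ((-V) y - (-V) x)) + (-f) x = 0 := by
    intro x
    have h1 : ∑ y, k x y * ((-V) y - (-V) x) = -∑ y, k x y * (V y - V x) := by
      rw [← Finset.sum_neg_distrib]
      exact Finset.sum_congr rfl (fun w _ => by simp; ring)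
    rw [h1, Pi.neg_apply]
    linarith [hV x]
  have habs : ∀ x y, |V x - V y| ≤ M * τ x y := by
    intro x y
    rw [abs_sub_le_iff]
    constructor
    · exact one_side k hk hirr τ hτ0 hτ f V hV M hMub x y
    · have := one_side k hk hirr τ hτ0 hτ (-f) (-V) hV' M
        (fun z => hMlb z) x y
      simp only [Pi.neg_apply] at this
      linarith
  intro x y
  rcases min_cases (τ x y) (τ y x) with ⟨h, -⟩ | ⟨h, -⟩
  · rw [h]; exact habs x y
  · rw [h, abs_sub_comm]; exact habs y x
end
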